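/- arXiv:2001.05306 — 4 statements merged into one kernel-verified Lean document; each statement's English description precedes it below -/
import Mathlib

section
/- Any two maximal lines of an n-correct set X intersect at a node of X. -/
attribute [local instance] Classical.propDecidable

/-- Evaluate a bivariate polynomial at a point of the plane. -/
noncomputable def evalPt (p : MvPolynomial (Fin 2) ℝ) (A : ℝ × ℝ) : ℝ :=
  MvPolynomial.eval ![A.1, A.2] p

/-- A (polynomial defining a) line: a bivariate polynomial of total degree exactly 1. -/
def IsLinearPoly (l : MvPolynomial (Fin 2) ℝ) : Prop := l.totalDegree = 1

/-- A point lies on the line defined by `l`. -/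
def OnLine (l : MvPolynomial (Fin 2) ℝ) (A : ℝ × ℝ) : Prop := evalPt l A = 0

/-- Two degree-1 polynomials define the same line (same zero set). -/
def SameLine (l₁ l₂ : MvPolynomial (Fin 2) ℝ) : Prop := ∀ P, OnLine l₁ P ↔ OnLine l₂ P

/-- `X` is an `n`-correct set of nodes in the plane. -/
def NCorrect (n : ℕ) (X : Finset (ℝ × ℝ)) : Prop :=
  X.card = (n + 2) * (n + 1) / 2 ∧
  ∀ c : (ℝ × ℝ) → ℝ, ∃! p : MvPolynomial (Fin 2) ℝ,
    p.totalDegree ≤ n ∧ ∀ A ∈ X, evalPt p A = c A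

/-- `p` is the `n`-fundamental polynomial of node `A` in `X`. -/
def IsFundamental (n : ℕ) (X : Finset (ℝ × ℝ)) (A : ℝ × ℝ)
    (p : MvPolynomial (Fin 2) ℝ) : Prop :=
  p.totalDegree ≤ n ∧ evalPt p A = 1 ∧ ∀ B ∈ X, B ≠ A → evalPt p B = 0

/-- Node `A` of `X` uses line `l`. -/
def Uses (n : ℕ) (X : Finset (ℝ × ℝ)) (A : ℝ × ℝ) (l : MvPolynomial (Fin 2) ℝ) : Prop :=
  ∃ p, IsFundamental n X A p ∧ l ∣ p

/-- The set of nodes of `X` using the line `l` (the set `Xˡ`). -/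
noncomputable def UsedSet (n : ℕ) (X : Finset (ℝ × ℝ)) (l : MvPolynomial (Fin 2) ℝ) :
    Finset (ℝ × ℝ) := X.filter (fun A => Uses n X A l)

/-- `l` is a maximal line of `X`: a line passing through exactly `n+1` nodes. -/
def IsMaximalLine (n : ℕ) (X : Finset (ℝ × ℝ)) (l : MvPolynomial (Fin 2) ℝ) : Prop :=
  IsLinearPoly l ∧ (X.filter (fun A => OnLine l A)).card = n + 1

/-- `X` is a `GC_n` set. -/
def GCSet (n : ℕ) (X : Finset (ℝ × ℝ)) : Prop :=
  NCorrect n X ∧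
  ∀ A ∈ X, ∃ f : Fin n → MvPolynomial (Fin 2) ℝ,
    (∀ i, IsLinearPoly (f i)) ∧ IsFundamental n X A (∏ i, f i)

/-- `L` is a set of representatives (one per line) of all maximal lines of `X`. -/
def MaximalLinesRep (n : ℕ) (X : Finset (ℝ × ℝ))
    (L : Finset (MvPolynomial (Fin 2) ℝ)) : Prop :=
  (∀ l ∈ L, IsMaximalLine n X l) ∧
  (∀ l₁ ∈ L, ∀ l₂ ∈ L, SameLine l₁ l₂ → l₁ = l₂) ∧
  (∀ l, IsMaximalLine n X l → ∃ l' ∈ L, SameLine l l')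

/-- A maximal line `lam` is `l`-disjoint: it meets `l` at no node of `X`. -/
def IsDisjointMax (n : ℕ) (X : Finset (ℝ × ℝ)) (l lam : MvPolynomial (Fin 2) ℝ) : Prop :=
  IsMaximalLine n X lam ∧ ∀ A ∈ X, ¬(OnLine lam A ∧ OnLine l A)

/-- A maximal line `lam` is a member of a pair of `l`-adjoint maximal lines. -/
def IsAdjointMax (n : ℕ) (X : Finset (ℝ × ℝ)) (l lam : MvPolynomial (Fin 2) ℝ) : Prop :=
  IsMaximalLine n X lam ∧ ∃ lam', IsMaximalLine n X lam' ∧ ¬SameLine lam lam' ∧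
    ∃ A ∈ X, OnLine lam A ∧ OnLine lam' A ∧ OnLine l A

/-- The `l`-lowering `X̂(l)` of `X`. -/
noncomputable def Lowering (n : ℕ) (X : Finset (ℝ × ℝ)) (l : MvPolynomial (Fin 2) ℝ) :
    Finset (ℝ × ℝ) :=
  X.filter (fun A => ¬ ∃ lam, (IsDisjointMax n X l lam ∨ IsAdjointMax n X l lam) ∧ OnLine lam A)

/-- A node `A` is a `1_m`-node of `X` w.r.t. the maximal-line representatives `L`:
it lies on exactly one maximal line. -/
def Is1mNode (L : Finset (MvPolynomial (Fin 2) ℝ)) (A : ℝ × ℝ) : Prop :=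
  (L.filter (fun l => OnLine l A)).card = 1

/-- `k` lines in general position: no two parallel (any two meet in exactly one point),
no three concurrent. -/
def InGenPos (k : ℕ) (f : Fin k → MvPolynomial (Fin 2) ℝ) : Prop :=
  (∀ i, IsLinearPoly (f i)) ∧
  (∀ i j, i ≠ j → ∃! P : ℝ × ℝ, OnLine (f i) P ∧ OnLine (f j) P) ∧
  (∀ i j m, i ≠ j → j ≠ m → i ≠ m →
    ¬ ∃ P : ℝ × ℝ, OnLine (f i) P ∧ OnLine (f j) P ∧ OnLine (f m) P)

/-- `X` is a Chung-Yao lattice of degree `m`. -/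
def IsChungYao (m : ℕ) (X : Finset (ℝ × ℝ)) : Prop :=
  ∃ f : Fin (m + 2) → MvPolynomial (Fin 2) ℝ, InGenPos (m + 2) f ∧
    ∀ P : ℝ × ℝ, P ∈ X ↔ ∃ i j, i ≠ j ∧ OnLine (f i) P ∧ OnLine (f j) P
section Aux

open Polynomial in
private lemma natDegree_affine_le (u w : ℝ) :
    (Polynomial.C u + Polynomial.C w * Polynomial.X).natDegree ≤ 1 := by
  compute_degree


private lemma v_natDegree_le (P d : ℝ × ℝ) (i : Fin 2) :
    ((![Polynomial.C P.1 + Polynomial.C d.1 * Polynomial.X,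
      Polynomial.C P.2 + Polynomial.C d.2 * Polynomial.X] : Fin 2 → Polynomial ℝ) i).natDegree ≤ 1 := by
  fin_cases i
  · simp only [Matrix.cons_val_zero]
    exact natDegree_affine_le P.1 d.1
  · simp only [Matrix.cons_val_one, Matrix.head_cons]
    exact natDegree_affine_le P.2 d.2

private lemma v_prod_natDegree_le (P d : ℝ × ℝ) (dd : Fin 2 →₀ ℕ) :
    (∏ i ∈ dd.support, ((![Polynomial.C P.1 + Polynomial.C d.1 * Polynomial.X,
      Polynomial.C P.2 + Polynomial.C d.2 * Polynomial.X] : Fin 2 → Polynomial ℝ) i) ^ dd i).natDegree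
      ≤ dd.sum fun _ e => e := by
  apply le_trans (Polynomial.natDegree_prod_le _ _)
  have hsum : (dd.sum fun _ e => e) = ∑ i ∈ dd.support, dd i := rfl
  rw [hsum]
  apply Finset.sum_le_sum
  intro i _
  apply le_trans Polynomial.natDegree_pow_le
  calc dd i * ((![Polynomial.C P.1 + Polynomial.C d.1 * Polynomial.X,
        Polynomial.C P.2 + Polynomial.C d.2 * Polynomial.X] : Fin 2 → Polynomial ℝ) i).natDegree
      ≤ dd i * 1 := Nat.mul_le_mul_left _ (v_natDegree_le P d i)
    _ = dd i := mul_one _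

private lemma finsupp_sum_fin2 (d : Fin 2 →₀ ℕ) : (d.sum fun _ e => e) = d 0 + d 1 := by
  rw [Finsupp.sum_fintype _ _ (fun _ => rfl)]
  exact Fin.sum_univ_two _

private lemma fin2_deg_le_one (d : Fin 2 →₀ ℕ) (h : d 0 + d 1 ≤ 1) :
    d = 0 ∨ d = Finsupp.single 0 1 ∨ d = Finsupp.single 1 1 := by
  have h0 : d 0 = 0 ∨ d 0 = 1 := by omega
  have h1 : d 1 = 0 ∨ d 1 = 1 := by omega
  rcases h0 with h0 | h0 <;> rcases h1 with h1 | h1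
  · left; ext i; fin_cases i <;> simp [h0, h1]
  · right; right; ext i; fin_cases i <;> simp [h0, h1, Finsupp.single_apply]
  · right; left; ext i; fin_cases i <;> simp [h0, h1, Finsupp.single_apply]
  · omega

private lemma lin_eval {l : MvPolynomial (Fin 2) ℝ} (hl : IsLinearPoly l) :
    ∃ a b c : ℝ, ¬(b = 0 ∧ c = 0) ∧ ∀ P : ℝ × ℝ, evalPt l P = a + b * P.1 + c * P.2 := by
  classical
  set a := l.coeff 0 with ha
  set b := l.coeff (Finsupp.single 0 1) with hb
  set c := l.coeff (Finsupp.single 1 1) with hc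
  have hrep : l = MvPolynomial.C a + MvPolynomial.C b * MvPolynomial.X 0 +
      MvPolynomial.C c * MvPolynomial.X 1 := by
    apply MvPolynomial.ext
    intro d
    by_cases hd : d 0 + d 1 ≤ 1
    · have hne0 : (Finsupp.single (0 : Fin 2) 1) ≠ (0 : Fin 2 →₀ ℕ) :=
        fun h => one_ne_zero (Finsupp.single_eq_zero.mp h)
      have hne1 : (Finsupp.single (1 : Fin 2) 1) ≠ (0 : Fin 2 →₀ ℕ) :=
        fun h => one_ne_zero (Finsupp.single_eq_zero.mp h)
      have hne01 : (Finsupp.single (0 : Fin 2) 1) ≠ Finsupp.single (1 : Fin 2) 1 := by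
        intro h
        have := DFunLike.congr_fun h 0
        simp [Finsupp.single_apply] at this
      rcases fin2_deg_le_one d hd with rfl | rfl | rfl <;>
        simp [MvPolynomial.coeff_add, MvPolynomial.coeff_C, MvPolynomial.coeff_C_mul,
          MvPolynomial.coeff_X', hne0, hne1, hne01, hne0.symm, hne1.symm, hne01.symm,
          ← ha, ← hb, ← hc]
    · have h2 : 1 < d.sum fun _ e => e := by rw [finsupp_sum_fin2]; omega
      have hz : l.coeff d = 0 := by
        apply MvPolynomial.coeff_eq_zero_of_totalDegree_lt
        rw [hl]; exact h2
      have hd0 : d ≠ 0 := by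
        rintro rfl; simp at h2
      have hd1 : d ≠ Finsupp.single 0 1 := by
        rintro rfl; rw [finsupp_sum_fin2] at h2; simp at h2
      have hd2 : d ≠ Finsupp.single 1 1 := by
        rintro rfl; rw [finsupp_sum_fin2] at h2; simp at h2
      simp [hz, MvPolynomial.coeff_add, MvPolynomial.coeff_C, MvPolynomial.coeff_C_mul,
        MvPolynomial.coeff_X', Ne.symm hd0, Ne.symm hd1, Ne.symm hd2, hd0, hd1, hd2]
  refine ⟨a, b, c, ?_, ?_⟩
  · rintro ⟨hb0, hc0⟩
    rw [hb0, hc0] at hrep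
    have : l.totalDegree = 0 := by
      rw [hrep]; simp
    rw [hl] at this; exact one_ne_zero this
  · intro P
    rw [evalPt, hrep]
    simp

/-- Parametrized point on a line through `P` with direction `d`. -/
private noncomputable def linePt (P d : ℝ × ℝ) (t : ℝ) : ℝ × ℝ :=
  (P.1 + d.1 * t, P.2 + d.2 * t)

/-- Restriction of a bivariate polynomial to a parametrized line. -/
private noncomputable def resPoly (P d : ℝ × ℝ) (p : MvPolynomial (Fin 2) ℝ) : Polynomial ℝ :=
  MvPolynomial.aeval ![Polynomial.C P.1 + Polynomial.C d.1 * Polynomial.X,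
    Polynomial.C P.2 + Polynomial.C d.2 * Polynomial.X] p

private lemma resPoly_eval (P d : ℝ × ℝ) (p : MvPolynomial (Fin 2) ℝ) (t : ℝ) :
    (resPoly P d p).eval t = evalPt p (linePt P d t) := by
  set v : Fin 2 → Polynomial ℝ := ![Polynomial.C P.1 + Polynomial.C d.1 * Polynomial.X,
    Polynomial.C P.2 + Polynomial.C d.2 * Polynomial.X] with hv
  have h1 : (resPoly P d p).eval t = (Polynomial.evalRingHom t) (MvPolynomial.eval₂ Polynomial.C v p) := by
    rw [resPoly, MvPolynomial.aeval_def]; rfl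
  rw [h1, MvPolynomial.eval₂_comp_left (Polynomial.evalRingHom t) Polynomial.C v p]
  have h2 : (Polynomial.evalRingHom t).comp Polynomial.C = RingHom.id ℝ := by
    ext x; simp
  rw [h2]
  have h3 : MvPolynomial.eval₂ (RingHom.id ℝ) (⇑(Polynomial.evalRingHom t) ∘ v) p =
      MvPolynomial.eval (⇑(Polynomial.evalRingHom t) ∘ v) p := rfl
  rw [h3, evalPt]
  have hw : (⇑(Polynomial.evalRingHom t) ∘ v) = ![(linePt P d t).1, (linePt P d t).2] := by
    funext i
    fin_cases i <;> simp [hv, linePt]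
  rw [hw]

private lemma resPoly_natDegree_le (P d : ℝ × ℝ) (p : MvPolynomial (Fin 2) ℝ) :
    (resPoly P d p).natDegree ≤ p.totalDegree := by
  rw [resPoly, MvPolynomial.aeval_def, MvPolynomial.eval₂_eq]
  apply Polynomial.natDegree_sum_le_of_forall_le
  intro dd hdd
  apply le_trans (Polynomial.natDegree_mul_le)
  have hC : (algebraMap ℝ (Polynomial ℝ) (p.coeff dd)).natDegree = 0 := Polynomial.natDegree_C _
  rw [hC, zero_add]
  exact le_trans (v_prod_natDegree_le P d dd) (MvPolynomial.le_totalDegree hdd)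

private lemma coeff_prod_of_natDegree_le' {ι : Type*} (s : Finset ι) (f : ι → Polynomial ℝ)
    (m : ι → ℕ) (h : ∀ i ∈ s, (f i).natDegree ≤ m i) :
    (∏ i ∈ s, f i).coeff (∑ i ∈ s, m i) = ∏ i ∈ s, (f i).coeff (m i) := by
  classical
  induction s using Finset.cons_induction with
  | empty => simp
  | cons a s ha ih =>
    rw [Finset.prod_cons, Finset.sum_cons,
      Polynomial.coeff_mul_add_eq_of_natDegree_le (h a (Finset.mem_cons_self a s))
        (le_trans (Polynomial.natDegree_prod_le _ _)
          (Finset.sum_le_sum fun i hi => h i (Finset.mem_cons_of_mem hi))),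
      ih fun i hi => h i (Finset.mem_cons_of_mem hi), Finset.prod_cons]

private lemma resPoly_coeff_formula (P d : ℝ × ℝ) (p : MvPolynomial (Fin 2) ℝ) {n : ℕ}
    (hp : p.totalDegree ≤ n) :
    (resPoly P d p).coeff n = ∑ dd ∈ p.support, p.coeff dd *
      (if (dd.sum fun _ e => e) = n then
        ∏ i ∈ dd.support, (![d.1, d.2] i) ^ dd i else 0) := by
  classical
  rw [resPoly, MvPolynomial.aeval_def, MvPolynomial.eval₂_eq, Polynomial.finset_sum_coeff]
  apply Finset.sum_congr rfl
  intro dd hdd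
  set v : Fin 2 → Polynomial ℝ := ![Polynomial.C P.1 + Polynomial.C d.1 * Polynomial.X,
    Polynomial.C P.2 + Polynomial.C d.2 * Polynomial.X] with hv
  have hCeq : (algebraMap ℝ (Polynomial ℝ)) (p.coeff dd) = Polynomial.C (p.coeff dd) := rfl
  rw [hCeq, Polynomial.coeff_C_mul]
  congr 1
  have hvdeg : ∀ i : Fin 2, (v i).natDegree ≤ 1 := fun i => v_natDegree_le P d i
  have hle : (dd.sum fun _ e => e) ≤ n := le_trans (MvPolynomial.le_totalDegree hdd) hp
  have hsum : (dd.sum fun _ e => e) = ∑ i ∈ dd.support, dd i := rfl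
  by_cases hdn : (dd.sum fun _ e => e) = n
  · rw [if_pos hdn, ← hdn, hsum]
    rw [coeff_prod_of_natDegree_le' _ _ _
      (fun i _ => le_trans Polynomial.natDegree_pow_le
        (by calc dd i * (v i).natDegree ≤ dd i * 1 := Nat.mul_le_mul_left _ (hvdeg i)
              _ = dd i := mul_one _))]
    apply Finset.prod_congr rfl
    intro i _
    have h2 := Polynomial.coeff_pow_of_natDegree_le (m := dd i) (hvdeg i)
    rw [mul_one] at h2
    rw [h2]
    congr 1
    fin_cases i <;> simp [hv]
  · rw [if_neg hdn]
    apply Polynomial.coeff_eq_zero_of_natDegree_lt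
    have hlt : (dd.sum fun _ e => e) < n := lt_of_le_of_ne hle hdn
    exact lt_of_le_of_lt (v_prod_natDegree_le P d dd) hlt

private lemma resPoly_coeff_eq (P P' d : ℝ × ℝ) (p : MvPolynomial (Fin 2) ℝ) {n : ℕ}
    (hp : p.totalDegree ≤ n) :
    (resPoly P d p).coeff n = (resPoly P' d p).coeff n := by
  rw [resPoly_coeff_formula P d p hp, resPoly_coeff_formula P' d p hp]

private lemma linePt_param {b c : ℝ} (hbc : ¬(b = 0 ∧ c = 0)) (P₀ B : ℝ × ℝ)
    (h : b * (B.1 - P₀.1) + c * (B.2 - P₀.2) = 0) :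
    linePt P₀ (c, -b) ((c * (B.1 - P₀.1) - b * (B.2 - P₀.2)) / (b ^ 2 + c ^ 2)) = B := by
  have hs : b ^ 2 + c ^ 2 ≠ 0 := by
    intro hz
    exact hbc ⟨by nlinarith [sq_nonneg b, sq_nonneg c], by nlinarith [sq_nonneg b, sq_nonneg c]⟩
  have h1 : c * ((c * (B.1 - P₀.1) - b * (B.2 - P₀.2)) / (b ^ 2 + c ^ 2)) = B.1 - P₀.1 := by
    rw [← mul_div_assoc, div_eq_iff hs]
    linear_combination (-b) * h
  have h2 : (-b) * ((c * (B.1 - P₀.1) - b * (B.2 - P₀.2)) / (b ^ 2 + c ^ 2)) = B.2 - P₀.2 := by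
    rw [← mul_div_assoc, div_eq_iff hs]
    linear_combination (-c) * h
  have : linePt P₀ (c, -b) ((c * (B.1 - P₀.1) - b * (B.2 - P₀.2)) / (b ^ 2 + c ^ 2)) =
      (P₀.1 + (B.1 - P₀.1), P₀.2 + (B.2 - P₀.2)) := by
    rw [linePt]
    exact Prod.ext (by rw [h1]) (by rw [h2])
  rw [this]
  exact Prod.ext (by ring) (by ring)

private lemma resPoly_eq_zero {p : MvPolynomial (Fin 2) ℝ} {b c : ℝ} (hbc : ¬(b = 0 ∧ c = 0))
    {S : Finset (ℝ × ℝ)} (P₀ : ℝ × ℝ)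
    (hon : ∀ B ∈ S, b * (B.1 - P₀.1) + c * (B.2 - P₀.2) = 0)
    (hz : ∀ B ∈ S, evalPt p B = 0)
    (hS : (resPoly P₀ (c, -b) p).natDegree < S.card) :
    resPoly P₀ (c, -b) p = 0 := by
  classical
  set tp : ℝ × ℝ → ℝ :=
    fun B => (c * (B.1 - P₀.1) - b * (B.2 - P₀.2)) / (b ^ 2 + c ^ 2) with htp
  have hparam : ∀ B ∈ S, linePt P₀ (c, -b) (tp B) = B :=
    fun B hB => linePt_param hbc P₀ B (hon B hB)
  apply Polynomial.eq_zero_of_natDegree_lt_card_of_eval_eq_zero' _ (S.image tp)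
  · intro t ht
    obtain ⟨B, hB, rfl⟩ := Finset.mem_image.mp ht
    rw [resPoly_eval, hparam B hB]
    exact hz B hB
  · rwa [Finset.card_image_of_injOn
      (fun B hB B' hB' hE => by rw [← hparam B hB, ← hparam B' hB', hE])]

private lemma parallel_transfer {b₁ c₁ b₂ c₂ u1 u2 : ℝ} (hD : b₁ * c₂ - b₂ * c₁ = 0)
    (hbc₂ : ¬(b₂ = 0 ∧ c₂ = 0)) (h : b₂ * u1 + c₂ * u2 = 0) : b₁ * u1 + c₁ * u2 = 0 := by
  by_cases hc₂ : c₂ = 0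
  · have hb₂ : b₂ ≠ 0 := fun hb => hbc₂ ⟨hb, hc₂⟩
    have hu1 : u1 = 0 := by
      rw [hc₂] at h
      simpa [hb₂] using h
    have hc₁ : c₁ = 0 := by
      rw [hc₂] at hD
      simp only [mul_zero, zero_sub, neg_eq_zero] at hD
      exact (mul_eq_zero.mp hD).resolve_left hb₂
    simp [hu1, hc₁]
  · have key : c₂ * (b₁ * u1 + c₁ * u2) =
        c₁ * (b₂ * u1 + c₂ * u2) + u1 * (b₁ * c₂ - b₂ * c₁) := by ring
    rw [h, hD] at key
    simp only [mul_zero, add_zero] at key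
    exact (mul_eq_zero.mp key).resolve_left hc₂

end Aux


/-- Any two (distinct) maximal lines of an `n`-correct set `X`
intersect at a node of `X`. -/
theorem maximal_lines_meet_at_node
    (n : ℕ) (X : Finset (ℝ × ℝ)) (hX : NCorrect n X)
    (l₁ l₂ : MvPolynomial (Fin 2) ℝ)
    (h₁ : IsMaximalLine n X l₁) (h₂ : IsMaximalLine n X l₂)
    (hne : ¬ SameLine l₁ l₂) :
    ∃ A ∈ X, OnLine l₁ A ∧ OnLine l₂ A := by
  classical
  by_contra hcon
  obtain ⟨a₁, b₁, c₁, hbc₁, he₁⟩ := lin_eval h₁.1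
  obtain ⟨a₂, b₂, c₂, hbc₂, he₂⟩ := lin_eval h₂.1
  have hon₁ : ∀ B, OnLine l₁ B → a₁ + b₁ * B.1 + c₁ * B.2 = 0 := by
    intro B h; rw [← he₁ B]; exact h
  have hon₂ : ∀ B, OnLine l₂ B → a₂ + b₂ * B.1 + c₂ * B.2 = 0 := by
    intro B h; rw [← he₂ B]; exact h
  -- pick a node A on l₁
  obtain ⟨A, hA⟩ := Finset.card_pos.mp
    (show 0 < (X.filter fun A => OnLine l₁ A).card by rw [h₁.2]; omega)
  have hAX : A ∈ X := (Finset.mem_filter.mp hA).1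
  have hA1 : OnLine l₁ A := (Finset.mem_filter.mp hA).2
  have hA2 : ¬ OnLine l₂ A := fun h2 => hcon ⟨A, hAX, hA1, h2⟩
  -- pick a node B₀ on l₂
  obtain ⟨B₀, hB₀⟩ := Finset.card_pos.mp
    (show 0 < (X.filter fun A => OnLine l₂ A).card by rw [h₂.2]; omega)
  have hB₀X : B₀ ∈ X := (Finset.mem_filter.mp hB₀).1
  have hB₀2 : OnLine l₂ B₀ := (Finset.mem_filter.mp hB₀).2
  -- fundamental polynomial of A
  obtain ⟨p, ⟨hdeg, hval⟩, -⟩ := hX.2 (fun B => if B = A then 1 else 0)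
  have hpA : evalPt p A = 1 := by simpa using hval A hAX
  have hp0 : ∀ B ∈ X, B ≠ A → evalPt p B = 0 := by
    intro B hB hBA
    simpa [hBA] using hval B hB
  -- p vanishes on all nodes of l₂
  have hzS₂ : ∀ B ∈ X.filter (fun A => OnLine l₂ A), evalPt p B = 0 := by
    intro B hB
    refine hp0 B (Finset.mem_filter.mp hB).1 ?_
    rintro rfl
    exact hA2 (Finset.mem_filter.mp hB).2
  -- facts about the restriction of p to line l₁ (base A, direction (c₁, -b₁))
  have hH₁deg : (resPoly A (c₁, -b₁) p).natDegree ≤ n :=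
    le_trans (resPoly_natDegree_le _ _ _) hdeg
  have hH₁0 : (resPoly A (c₁, -b₁) p).eval 0 = 1 := by
    rw [resPoly_eval]
    have : linePt A (c₁, -b₁) 0 = A := by
      rw [linePt]; exact Prod.ext (by simp) (by simp)
    rw [this, hpA]
  have hH₁ne : resPoly A (c₁, -b₁) p ≠ 0 := by
    intro h
    rw [h] at hH₁0
    simpa using hH₁0
  -- the other nodes on l₁
  set S₁' := (X.filter fun A' => OnLine l₁ A').erase A with hS₁'
  have hS₁'card : S₁'.card = n := by
    rw [hS₁', Finset.card_erase_of_mem hA, h₁.2]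
    omega
  have honS₁' : ∀ B ∈ S₁', b₁ * (B.1 - A.1) + c₁ * (B.2 - A.2) = 0 := by
    intro B hB
    have hB1 : OnLine l₁ B :=
      (Finset.mem_filter.mp (Finset.mem_of_mem_erase hB)).2
    linear_combination (hon₁ B hB1) - (hon₁ A hA1)
  have hzS₁' : ∀ B ∈ S₁', evalPt p B = 0 := by
    intro B hB
    exact hp0 B (Finset.mem_filter.mp (Finset.mem_of_mem_erase hB)).1
      (Finset.ne_of_mem_erase hB)
  by_cases hD : b₁ * c₂ - b₂ * c₁ = 0
  · -- parallel case
    have hH₂' : resPoly B₀ (c₁, -b₁) p = 0 := by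
      apply resPoly_eq_zero (S := X.filter fun A => OnLine l₂ A) hbc₁ B₀
      · intro B hB
        have hB2 : OnLine l₂ B := (Finset.mem_filter.mp hB).2
        exact parallel_transfer hD hbc₂
          (by linear_combination (hon₂ B hB2) - (hon₂ B₀ hB₀2))
      · exact hzS₂
      · calc (resPoly B₀ (c₁, -b₁) p).natDegree ≤ n :=
            le_trans (resPoly_natDegree_le _ _ _) hdeg
          _ < n + 1 := Nat.lt_succ_self n
          _ = (X.filter fun A => OnLine l₂ A).card := (h₂.2).symm
    have hcoeff : (resPoly A (c₁, -b₁) p).coeff n = 0 := by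
      rw [resPoly_coeff_eq A B₀ (c₁, -b₁) p hdeg, hH₂']
      simp
    have hlt : (resPoly A (c₁, -b₁) p).natDegree < n := by
      rcases lt_or_eq_of_le hH₁deg with h | h
      · exact h
      · exfalso
        apply hH₁ne
        apply Polynomial.leadingCoeff_eq_zero.mp
        rw [Polynomial.leadingCoeff, h, hcoeff]
    have hzero : resPoly A (c₁, -b₁) p = 0 := by
      apply resPoly_eq_zero hbc₁ A honS₁' hzS₁'
      rw [hS₁'card]
      exact hlt
    exact hH₁ne hzero
  · -- non-parallel case: explicit intersection point Q
    set Q : ℝ × ℝ := ((c₁ * a₂ - c₂ * a₁) / (b₁ * c₂ - b₂ * c₁),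
      (b₂ * a₁ - b₁ * a₂) / (b₁ * c₂ - b₂ * c₁)) with hQ
    have hQ1 : a₁ + b₁ * Q.1 + c₁ * Q.2 = 0 := by
      rw [hQ]
      field_simp
      linear_combination (-a₁) * mul_inv_cancel₀ hD
    have hQ2 : a₂ + b₂ * Q.1 + c₂ * Q.2 = 0 := by
      rw [hQ]
      field_simp
      linear_combination (-a₂) * mul_inv_cancel₀ hD
    have hQX : Q ∉ X := by
      intro hQmem
      exact hcon ⟨Q, hQmem, by rw [OnLine, he₁ Q]; exact hQ1,
        by rw [OnLine, he₂ Q]; exact hQ2⟩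
    -- p vanishes on the whole line l₂
    have hH₂ : resPoly B₀ (c₂, -b₂) p = 0 := by
      apply resPoly_eq_zero (S := X.filter fun A => OnLine l₂ A) hbc₂ B₀
      · intro B hB
        have hB2 : OnLine l₂ B := (Finset.mem_filter.mp hB).2
        linear_combination (hon₂ B hB2) - (hon₂ B₀ hB₀2)
      · exact hzS₂
      · calc (resPoly B₀ (c₂, -b₂) p).natDegree ≤ n :=
            le_trans (resPoly_natDegree_le _ _ _) hdeg
          _ < n + 1 := Nat.lt_succ_self n
          _ = (X.filter fun A => OnLine l₂ A).card := (h₂.2).symm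
    have hpQ : evalPt p Q = 0 := by
      have hpar := linePt_param hbc₂ B₀ Q
        (by linear_combination hQ2 - (hon₂ B₀ hB₀2))
      calc evalPt p Q = (resPoly B₀ (c₂, -b₂) p).eval
            ((c₂ * (Q.1 - B₀.1) - b₂ * (Q.2 - B₀.2)) / (b₂ ^ 2 + c₂ ^ 2)) := by
            rw [resPoly_eval, hpar]
        _ = 0 := by rw [hH₂]; simp
    have hQS : Q ∉ S₁' := by
      intro h
      exact hQX (Finset.mem_filter.mp (Finset.mem_of_mem_erase h)).1
    have hzero : resPoly A (c₁, -b₁) p = 0 := by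
      apply resPoly_eq_zero hbc₁ A (S := insert Q S₁')
      · intro B hB
        rcases Finset.mem_insert.mp hB with rfl | hB'
        · linear_combination hQ1 - (hon₁ A hA1)
        · exact honS₁' B hB'
      · intro B hB
        rcases Finset.mem_insert.mp hB with rfl | hB'
        · exact hpQ
        · exact hzS₁' B hB'
      · rw [Finset.card_insert_of_notMem hQS, hS₁'card]
        omega
    exact hH₁ne hzero
end

section
/- If λ is a maximal line of a GC_n set X (n ≥ 1), then X \ λ is a GC_{n−1} set. -/
attribute [local instance] Classical.propDecidable

lemma fin2_degree_cases (d : Fin 2 →₀ ℕ) :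
    d = 0 ∨ d = Finsupp.single 0 1 ∨ d = Finsupp.single 1 1 ∨ 2 ≤ d 0 + d 1 := by
  by_cases h0 : d = 0
  · exact Or.inl h0
  by_cases h1 : d = Finsupp.single 0 1
  · exact Or.inr (Or.inl h1)
  by_cases h2 : d = Finsupp.single 1 1
  · exact Or.inr (Or.inr (Or.inl h2))
  refine Or.inr (Or.inr (Or.inr ?_))
  rw [Finsupp.ext_iff, Fin.forall_fin_two] at h0 h1 h2
  simp [Finsupp.single_apply] at h0 h1 h2
  omega

lemma linear_repr (l : MvPolynomial (Fin 2) ℝ) (hl : l.totalDegree ≤ 1) :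
    ∃ a b c : ℝ, (∀ P : ℝ × ℝ, evalPt l P = a * P.1 + b * P.2 + c) ∧
      (¬ (a = 0 ∧ b = 0) ∨ l.totalDegree = 0) := by
  set a := l.coeff (Finsupp.single 0 1) with ha
  set b := l.coeff (Finsupp.single 1 1) with hb
  set c := l.coeff 0 with hc
  have hrepr : l = MvPolynomial.C a * MvPolynomial.X 0 + MvPolynomial.C b * MvPolynomial.X 1
      + MvPolynomial.C c := by
    apply MvPolynomial.ext
    intro d
    rcases fin2_degree_cases d with h | h | h | h
    · subst h
      simp [MvPolynomial.coeff_C_mul, MvPolynomial.coeff_X', MvPolynomial.coeff_C,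
        Finsupp.single_eq_zero]
      exact hc.symm
    · subst h
      simp [MvPolynomial.coeff_C_mul, MvPolynomial.coeff_X', MvPolynomial.coeff_C,
        Finsupp.single_eq_single_iff, Finsupp.single_eq_zero]
      rw [if_neg (Finsupp.single_ne_zero.mpr one_ne_zero : Finsupp.single (0 : Fin 2) (1 : ℕ) ≠ 0).symm, add_zero, ha]
    · subst h
      simp [MvPolynomial.coeff_C_mul, MvPolynomial.coeff_X', MvPolynomial.coeff_C,
        Finsupp.single_eq_single_iff, Finsupp.single_eq_zero]
      rw [if_neg (Finsupp.single_ne_zero.mpr one_ne_zero : Finsupp.single (1 : Fin 2) (1 : ℕ) ≠ 0).symm, add_zero, hb]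
    · have hld : l.coeff d = 0 := by
        by_contra hne
        have hmem : d ∈ l.support := by
          simpa [MvPolynomial.mem_support_iff] using hne
        have := MvPolynomial.le_totalDegree hmem
        have hsum : d.sum (fun _ e => e) = d 0 + d 1 := by
          rw [Finsupp.sum_fintype _ _ (fun _ => rfl), Fin.sum_univ_two]
        omega
      have h1 : d ≠ Finsupp.single 0 1 := by
        rintro rfl; simp [Finsupp.single_apply] at h
      have h2 : d ≠ Finsupp.single 1 1 := by
        rintro rfl; simp [Finsupp.single_apply] at h
      have h3 : d ≠ 0 := by
        rintro rfl; simp at h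
      simp [hld, MvPolynomial.coeff_C_mul, MvPolynomial.coeff_X', MvPolynomial.coeff_C,
        Ne.symm h1, Ne.symm h2, Ne.symm h3]
  refine ⟨a, b, c, ?_, ?_⟩
  · intro P
    rw [evalPt, hrepr]
    simp
  · by_cases hab : a = 0 ∧ b = 0
    · right
      rw [hrepr, hab.1, hab.2]
      simp
    · left; exact hab

lemma two_point_line {l₁ l₂ : MvPolynomial (Fin 2) ℝ}
    (h1 : l₁.totalDegree = 1) (h2 : l₂.totalDegree = 1)
    {P Q : ℝ × ℝ} (hPQ : P ≠ Q)
    (h1P : OnLine l₁ P) (h1Q : OnLine l₁ Q) (h2P : OnLine l₂ P) (h2Q : OnLine l₂ Q) :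
    ∀ R, OnLine l₁ R ↔ OnLine l₂ R := by
  obtain ⟨a₁, b₁, c₁, he₁, hn₁⟩ := linear_repr l₁ h1.le
  obtain ⟨a₂, b₂, c₂, he₂, hn₂⟩ := linear_repr l₂ h2.le
  have hn₁ : ¬ (a₁ = 0 ∧ b₁ = 0) := by rcases hn₁ with h | h; exact h; omega
  have hn₂ : ¬ (a₂ = 0 ∧ b₂ = 0) := by rcases hn₂ with h | h; exact h; omega
  unfold OnLine at *
  rw [he₁] at h1P h1Q; rw [he₂] at h2P h2Q
  have k1 : a₁ * (Q.1 - P.1) + b₁ * (Q.2 - P.2) = 0 := by linear_combination h1Q - h1P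
  have k2 : a₂ * (Q.1 - P.1) + b₂ * (Q.2 - P.2) = 0 := by linear_combination h2Q - h2P
  have hd : ¬ (Q.1 - P.1 = 0 ∧ Q.2 - P.2 = 0) := by
    rintro ⟨u, v⟩
    exact hPQ (Prod.ext (by linarith) (by linarith))
  have hcross : a₁ * b₂ - a₂ * b₁ = 0 := by
    rcases (not_and_or.mp hd) with h | h
    · have hz : (Q.1 - P.1) * (a₁ * b₂ - a₂ * b₁) = 0 := by
        linear_combination b₂ * k1 - b₁ * k2
      rcases mul_eq_zero.mp hz with h' | h'
      · exact absurd h' h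
      · exact h'
    · have hz : (Q.2 - P.2) * (a₁ * b₂ - a₂ * b₁) = 0 := by
        linear_combination a₁ * k2 - a₂ * k1
      rcases mul_eq_zero.mp hz with h' | h'
      · exact absurd h' h
      · exact h'
  obtain ⟨t, ht0, hta, htb⟩ : ∃ t : ℝ, t ≠ 0 ∧ a₂ = t * a₁ ∧ b₂ = t * b₁ := by
    by_cases ha1 : a₁ = 0
    · have hb1 : b₁ ≠ 0 := fun h => hn₁ ⟨ha1, h⟩
      have ha2 : a₂ = 0 := by
        have : a₂ * b₁ = 0 := by linear_combination -hcross + b₂ * ha1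
        rcases mul_eq_zero.mp this with h | h
        · exact h
        · exact absurd h hb1
      refine ⟨b₂ / b₁, ?_, by rw [ha1, ha2]; ring, by field_simp⟩
      intro h
      have hb2 : b₂ = 0 := by
        rcases div_eq_zero_iff.mp h with h | h
        · exact h
        · exact absurd h hb1
      exact hn₂ ⟨ha2, hb2⟩
    · refine ⟨a₂ / a₁, ?_, by field_simp, ?_⟩
      · intro h
        have ha2 : a₂ = 0 := by
          rcases div_eq_zero_iff.mp h with h | h
          · exact h
          · exact absurd h ha1
        have hb2 : b₂ = 0 := by
          have : a₁ * b₂ = 0 := by linear_combination hcross + b₁ * ha2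
          rcases mul_eq_zero.mp this with h | h
          · exact absurd h ha1
          · exact h
        exact hn₂ ⟨ha2, hb2⟩
      · field_simp
        linear_combination hcross
  have hc : c₂ = t * c₁ := by
    have e2 : t * a₁ * P.1 + t * b₁ * P.2 + c₂ = 0 := by rw [← hta, ← htb]; exact h2P
    linear_combination e2 - t * h1P
  intro R
  rw [he₁, he₂, hta, htb, hc]
  constructor
  · intro h; linear_combination t * h
  · intro h
    have hz : t * (a₁ * R.1 + b₁ * R.2 + c₁) = 0 := by linear_combination h
    rcases mul_eq_zero.mp hz with h' | h'
    · exact absurd h' ht0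
    · exact h'

lemma totalDegree_C_mul_ne {t : ℝ} (ht : t ≠ 0) (p : MvPolynomial (Fin 2) ℝ) :
    (MvPolynomial.C t * p).totalDegree = p.totalDegree := by
  apply le_antisymm
  · exact (MvPolynomial.totalDegree_mul _ _).trans (by simp)
  · have h := MvPolynomial.totalDegree_mul (MvPolynomial.C t⁻¹) (MvPolynomial.C t * p)
    rw [← mul_assoc, ← MvPolynomial.C_mul, inv_mul_cancel₀ ht, MvPolynomial.C_1, one_mul] at h
    simpa using h

/-- Removing a maximal line from a `GC_n` set yields a `GC_{n-1}` set. -/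
theorem GC_minus_maximal
    (n : ℕ) (hn : 1 ≤ n) (X : Finset (ℝ × ℝ)) (hX : GCSet n X)
    (lam : MvPolynomial (Fin 2) ℝ) (hlam : IsMaximalLine n X lam) :
    GCSet (n - 1) (X.filter (fun A => ¬ OnLine lam A)) := by
  obtain ⟨m, rfl⟩ : ∃ m, n = m + 1 := ⟨n - 1, (Nat.succ_pred_eq_of_pos hn).symm⟩
  simp only [Nat.add_sub_cancel]
  obtain ⟨⟨hcard, hinterp⟩, hGC⟩ := hX
  obtain ⟨hlamdeg, hlamcard⟩ := hlam
  have hld : lam.totalDegree = 1 := hlamdeg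
  set Y := X.filter (fun A => ¬ OnLine lam A) with hYdef
  -- cardinality of Y
  have hYcard : Y.card = (m + 2) * (m + 1) / 2 := by
    have hsplit := Finset.card_filter_add_card_filter_not
      (s := X) (p := fun A => OnLine lam A)
    have hYc : (X.filter (fun A => ¬ OnLine lam A)).card = Y.card := by rw [hYdef]
    obtain ⟨k, hk⟩ := Nat.even_mul_succ_self (m + 1)
    have h1 : (m + 1 + 2) * (m + 1 + 1) = 2 * k + 2 * (m + 2) := by
      rw [show (m + 1 + 2) * (m + 1 + 1) = (m + 1) * (m + 1 + 1) + 2 * (m + 2) from by ring,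
        hk]
      ring
    have h2 : (m + 1 + 2) * (m + 1 + 1) / 2 = k + (m + 2) := by
      rw [h1, show 2 * k + 2 * (m + 2) = 2 * (k + (m + 2)) from by ring,
        Nat.mul_div_cancel_left _ two_pos]
    have h3 : (m + 2) * (m + 1) / 2 = k := by
      rw [show (m + 2) * (m + 1) = 2 * k from by rw [mul_comm]; rw [hk]; ring,
        Nat.mul_div_cancel_left _ two_pos]
    rw [h3]
    rw [hYc, hcard, h2, hlamcard] at hsplit
    omega
  -- key: fundamental polynomials of nodes of Y, as products of m lines
  have key : ∀ A ∈ Y, ∃ f' : Fin m → MvPolynomial (Fin 2) ℝ,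
      (∀ j, IsLinearPoly (f' j)) ∧ IsFundamental m Y A (∏ j, f' j) := by
    intro A hA
    by_cases hm : m = 0
    · subst hm
      refine ⟨fun j => j.elim0, fun j => j.elim0, ?_, ?_, ?_⟩
      · simp
      · rw [Finset.univ_eq_empty, Finset.prod_empty, evalPt, map_one]
      · intro B' hB' hne
        exfalso
        have hY1 : Y.card = 1 := by omega
        obtain ⟨x, hx⟩ := Finset.card_eq_one.mp hY1
        rw [hx, Finset.mem_singleton] at hA hB'
        exact hne (hB'.trans hA.symm)
    · have hAX : A ∈ X := (Finset.mem_filter.mp hA).1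
      have hAlam : ¬ OnLine lam A := (Finset.mem_filter.mp hA).2
      obtain ⟨f, hflin, hdeg, hval1, hval0⟩ := hGC A hAX
      set S := X.filter (fun B => OnLine lam B) with hSdef
      have hzero : ∀ B ∈ S, ∃ i, evalPt (f i) B = 0 := by
        intro B hB
        have hBX : B ∈ X := (Finset.mem_filter.mp hB).1
        have hBA : B ≠ A := by
          rintro rfl
          exact hAlam (Finset.mem_filter.mp hB).2
        have h0 := hval0 B hBX hBA
        rw [evalPt, map_prod] at h0
        obtain ⟨i, _, hi⟩ := Finset.prod_eq_zero_iff.mp h0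
        exact ⟨i, hi⟩
      set g : (ℝ × ℝ) → Fin (m + 1) :=
        fun B => if h : ∃ i, evalPt (f i) B = 0 then h.choose else 0 with hgdef
      have hgspec : ∀ B ∈ S, evalPt (f (g B)) B = 0 := by
        intro B hB
        have hex : ∃ i, evalPt (f i) B = 0 := hzero B hB
        simp only [hgdef]
        rw [dif_pos hex]
        exact hex.choose_spec
      obtain ⟨B, hB, C, hC, hBC, hgBC⟩ :=
        Finset.exists_ne_map_eq_of_card_lt_of_maps_to
          (t := (Finset.univ : Finset (Fin (m + 1))))
          (by rw [hlamcard]; simp) (fun B _ => Finset.mem_univ (g B))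
      set i := g B with hidef
      have hfiB : evalPt (f i) B = 0 := hgspec B hB
      have hfiC : evalPt (f i) C = 0 := by
        rw [hgBC]; exact hgspec C hC
      have hsame : ∀ R, OnLine (f i) R ↔ OnLine lam R :=
        two_point_line (hflin i) hld hBC hfiB hfiC
          (Finset.mem_filter.mp hB).2 (Finset.mem_filter.mp hC).2
      have hprodsplit : (∏ j, f j) = f i * ∏ j : Fin m, f (i.succAbove j) :=
        Fin.prod_univ_succAbove f i
      set q := ∏ j : Fin m, f (i.succAbove j) with hqdef
      set t := evalPt (f i) A with htdef
      have ht : t * evalPt q A = 1 := by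
        have h1 := hval1
        rw [hprodsplit, evalPt, map_mul] at h1
        exact h1
      have htne : t ≠ 0 := left_ne_zero_of_mul_eq_one ht
      have hqB : ∀ B' ∈ Y, B' ≠ A → evalPt q B' = 0 := by
        intro B' hB' hne
        have hB'X : B' ∈ X := (Finset.mem_filter.mp hB').1
        have h0 := hval0 B' hB'X hne
        rw [hprodsplit, evalPt, map_mul] at h0
        have hfine : evalPt (f i) B' ≠ 0 := by
          intro hz
          exact (Finset.mem_filter.mp hB').2 ((hsame B').mp hz)
        exact (mul_eq_zero.mp h0).resolve_left hfine
      have hqdeg : q.totalDegree ≤ m := by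
        refine (MvPolynomial.totalDegree_finset_prod _ _).trans ?_
        rw [Finset.sum_congr rfl (fun j _ => hflin (i.succAbove j))]
        simp
      have hCq1 : evalPt (MvPolynomial.C t * q) A = 1 := by
        rw [evalPt, map_mul, MvPolynomial.eval_C]
        exact ht
      have hCq0 : ∀ B' ∈ Y, B' ≠ A → evalPt (MvPolynomial.C t * q) B' = 0 := by
        intro B' hB' hne
        rw [evalPt, map_mul, MvPolynomial.eval_C]
        have h0 := hqB B' hB' hne
        rw [evalPt] at h0
        rw [h0, mul_zero]
      have hCqdeg : (MvPolynomial.C t * q).totalDegree ≤ m := by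
        rw [totalDegree_C_mul_ne htne]
        exact hqdeg
      -- build the family of m lines
      have hmpos : 0 < m := Nat.pos_of_ne_zero hm
      set j0 : Fin m := ⟨0, hmpos⟩ with hj0
      set f' : Fin m → MvPolynomial (Fin 2) ℝ :=
        fun j => if j = j0 then MvPolynomial.C t * f (i.succAbove j) else f (i.succAbove j)
        with hf'
      have hf'lin : ∀ j, IsLinearPoly (f' j) := by
        intro j
        simp only [hf']
        split
        · exact (totalDegree_C_mul_ne htne (f (i.succAbove j))).trans (hflin (i.succAbove j))
        · exact hflin _
      have hprod : (∏ j, f' j) = MvPolynomial.C t * q := by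
        rw [← Finset.mul_prod_erase Finset.univ f' (Finset.mem_univ j0)]
        rw [hqdef, ← Finset.mul_prod_erase Finset.univ (fun j => f (i.succAbove j))
          (Finset.mem_univ j0)]
        have hcong : ∀ j ∈ Finset.univ.erase j0, f' j = f (i.succAbove j) := by
          intro j hj
          simp only [hf']
          rw [if_neg (Finset.mem_erase.mp hj).1]
        rw [Finset.prod_congr rfl hcong]
        simp only [hf', if_pos rfl]
        ring
      refine ⟨f', hf'lin, ?_, ?_, ?_⟩
      · rw [hprod]; exact hCqdeg
      · rw [hprod]; exact hCq1
      · intro B' hB' hne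
        rw [hprod]
        exact hCq0 B' hB' hne
  -- assemble
  have hlamne : lam ≠ 0 := by
    intro h
    rw [h] at hld
    simp at hld
  refine ⟨⟨hYcard, ?_⟩, ?_⟩
  · intro c
    choose f' hf'lin hf'fund using key
    set p0 : MvPolynomial (Fin 2) ℝ :=
      ∑ A ∈ Y.attach, MvPolynomial.C (c A.1) * ∏ j, f' A.1 A.2 j with hp0
    have hp0deg : p0.totalDegree ≤ m := by
      refine (MvPolynomial.totalDegree_finset_sum _ _).trans (Finset.sup_le ?_)
      intro A _
      refine (MvPolynomial.totalDegree_mul _ _).trans ?_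
      simp only [MvPolynomial.totalDegree_C, zero_add]
      exact (hf'fund A.1 A.2).1
    have hp0val : ∀ B ∈ Y, evalPt p0 B = c B := by
      intro B hB
      rw [hp0, evalPt, map_sum]
      rw [Finset.sum_eq_single (⟨B, hB⟩ : {x // x ∈ Y})]
      · rw [map_mul, MvPolynomial.eval_C]
        have h1 := (hf'fund B hB).2.1
        rw [evalPt] at h1
        rw [h1, mul_one]
      · intro A _ hne
        rw [map_mul, MvPolynomial.eval_C]
        have h0 := (hf'fund A.1 A.2).2.2 B hB (fun hh => hne (Subtype.ext hh.symm))
        rw [evalPt] at h0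
        rw [h0, mul_zero]
      · intro hnmem
        exact absurd (Finset.mem_attach _ _) hnmem
    have huniq : ∀ p₁ p₂ : MvPolynomial (Fin 2) ℝ, p₁.totalDegree ≤ m → p₂.totalDegree ≤ m →
        (∀ B ∈ Y, evalPt p₁ B = evalPt p₂ B) → p₁ = p₂ := by
      intro p₁ p₂ hd1 hd2 hval
      obtain ⟨ps, _, hsu⟩ := hinterp (fun B => evalPt (lam * p₁) B)
      have hdegmul : ∀ p : MvPolynomial (Fin 2) ℝ, p.totalDegree ≤ m →
          (lam * p).totalDegree ≤ m + 1 := by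
        intro p hp
        refine (MvPolynomial.totalDegree_mul _ _).trans ?_
        rw [hld]
        omega
      have h1 : lam * p₁ = ps := hsu _ ⟨hdegmul _ hd1, fun B _ => rfl⟩
      have h2 : lam * p₂ = ps := by
        refine hsu _ ⟨hdegmul _ hd2, ?_⟩
        intro B hBX
        show evalPt (lam * p₂) B = evalPt (lam * p₁) B
        by_cases hOn : OnLine lam B
        · have h0 : MvPolynomial.eval ![B.1, B.2] lam = 0 := hOn
          rw [evalPt, evalPt, map_mul, map_mul, h0, zero_mul, zero_mul]
        · have hBY : B ∈ Y := Finset.mem_filter.mpr ⟨hBX, hOn⟩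
          have hv := hval B hBY
          rw [evalPt, evalPt] at hv
          rw [evalPt, evalPt, map_mul, map_mul, hv]
      exact mul_left_cancel₀ hlamne (h1.trans h2.symm)
    refine ⟨p0, ⟨hp0deg, hp0val⟩, ?_⟩
    intro p hp
    exact huniq p p0 hp.1 hp0deg (fun B hB => by rw [hp.2 B hB, hp0val B hB])
  · intro A hA
    exact key A hA
end

section
/- Let X be an n-correct set and ℓ a line containing at most n nodes of X. If λ is a maximal line of X with λ ∩ ℓ ∩ X = ∅ (an ℓ-disjoint maximal line), then the set of nodes of X using ℓ equals the set of nodes of X \ λ using ℓ: X^ℓ = (X \ λ)^ℓ. -/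
attribute [local instance] Classical.propDecidable

namespace DJR

open MvPolynomial

abbrev M := MvPolynomial (Fin 2) ℝ

noncomputable def homT : M →ₐ[ℝ] Polynomial M :=
  aeval (fun i => Polynomial.C (X i) * Polynomial.X)

lemma homT_monomial (d : Fin 2 →₀ ℕ) (a : ℝ) :
    homT (monomial d a) = Polynomial.C (monomial d a) * Polynomial.X ^ (d.degree) := by
  rw [homT, aeval_monomial]
  have h1 : (d.prod fun i k => (Polynomial.C (X i : M) * Polynomial.X) ^ k)
      = Polynomial.C (d.prod fun i k => (X i : M) ^ k) * Polynomial.X ^ d.degree := by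
    rw [Finsupp.prod, Finsupp.prod, Finsupp.degree]
    simp_rw [mul_pow]
    rw [Finset.prod_mul_distrib, Finset.prod_pow_eq_pow_sum]
    simp_rw [← map_pow]
    rw [← map_prod]
    rfl
  rw [h1, monomial_eq]
  have h2 : algebraMap ℝ (Polynomial M) a = Polynomial.C (C a) := rfl
  rw [h2, ← mul_assoc, ← Polynomial.C_mul]

lemma homT_coeff (p : M) (k : ℕ) : (homT p).coeff k = homogeneousComponent k p := by
  conv_lhs => rw [p.as_sum]
  conv_rhs => rw [p.as_sum]
  rw [map_sum, Polynomial.finset_sum_coeff, map_sum]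
  refine Finset.sum_congr rfl fun d _ => ?_
  rw [homT_monomial, Polynomial.coeff_C_mul, Polynomial.coeff_X_pow]
  have hm : (monomial d (coeff d p)) ∈ homogeneousSubmodule (Fin 2) ℝ d.degree :=
    isHomogeneous_monomial _ rfl
  rw [homogeneousComponent_of_mem hm]
  by_cases h : d.degree = k
  · simp [h]
  · simp [h, Ne.symm h]

lemma homT_ne_zero {p : M} (hp : p ≠ 0) : homT p ≠ 0 := by
  intro h
  apply hp
  rw [← p.sum_homogeneousComponent]
  refine Finset.sum_eq_zero fun i _ => ?_
  rw [← homT_coeff, h, Polynomial.coeff_zero]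

lemma top_component_ne_zero {p : M} (hp : p ≠ 0) :
    homogeneousComponent p.totalDegree p ≠ 0 := by
  have hne : p.support.Nonempty :=
    Finset.nonempty_iff_ne_empty.mpr (fun h => hp (support_eq_empty.mp h))
  obtain ⟨d, hd, hdeg⟩ := Finset.exists_mem_eq_sup p.support hne (fun m => m.sum fun _ e => e)
  intro h0
  have hdd : d.degree = p.totalDegree := by
    rw [totalDegree, hdeg]
    simp [Finsupp.degree, Finsupp.sum]
    rfl
  have := coeff_homogeneousComponent (n := p.totalDegree) (φ := p) d
  rw [h0, if_pos hdd] at this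
  exact (mem_support_iff.mp hd) this.symm

lemma homT_natDegree {p : M} (hp : p ≠ 0) : (homT p).natDegree = p.totalDegree := by
  refine le_antisymm (Polynomial.natDegree_le_iff_coeff_eq_zero.mpr fun N hN => ?_)
    (Polynomial.le_natDegree_of_ne_zero ?_)
  · rw [homT_coeff]; exact homogeneousComponent_eq_zero _ _ hN
  · rw [homT_coeff]; exact top_component_ne_zero hp

lemma td_mul {p q : M} (hp : p ≠ 0) (hq : q ≠ 0) :
    (p * q).totalDegree = p.totalDegree + q.totalDegree := by
  have hpq : p * q ≠ 0 := mul_ne_zero hp hq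
  rw [← homT_natDegree hpq, ← homT_natDegree hp, ← homT_natDegree hq, map_mul]
  exact Polynomial.natDegree_mul (homT_ne_zero hp) (homT_ne_zero hq)

lemma sum_eq_two (m : Fin 2 →₀ ℕ) : (m.sum fun _ e => e) = m 0 + m 1 := by
  rw [Finsupp.sum_fintype _ _ (fun _ => rfl), Fin.sum_univ_two]

lemma linear_exists {l : M} (hl : l.totalDegree = 1) :
    ∃ a b c : ℝ, ¬(a = 0 ∧ b = 0) ∧ l = C a * X 0 + C b * X 1 + C c := by
  classical
  set a := coeff (Finsupp.single 0 1) l with ha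
  set b := coeff (Finsupp.single 1 1) l with hb
  set c := coeff 0 l with hc
  have hclass : ∀ m : Fin 2 →₀ ℕ, coeff m l ≠ 0 →
      m = 0 ∨ m = Finsupp.single 0 1 ∨ m = Finsupp.single 1 1 := by
    intro m hm
    have hs : (m.sum fun _ e => e) ≤ 1 := hl ▸ le_totalDegree (mem_support_iff.mpr hm)
    rw [sum_eq_two] at hs
    have h0 : m 0 = 0 ∨ m 0 = 1 := by omega
    have h1 : m 1 = 0 ∨ m 1 = 1 := by omega
    rcases h0 with h0 | h0 <;> rcases h1 with h1 | h1
    · left; ext i; fin_cases i <;> simp [h0, h1]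
    · right; right; ext i; fin_cases i <;> simp [h0, h1, Finsupp.single_apply]
    · right; left; ext i; fin_cases i <;> simp [h0, h1, Finsupp.single_apply]
    · omega
  have heq : l = C a * X 0 + C b * X 1 + C c := by
    apply MvPolynomial.ext
    intro m
    rw [coeff_add, coeff_add, coeff_C_mul, coeff_C_mul, coeff_X', coeff_X', coeff_C]
    have hne01 : (Finsupp.single (0 : Fin 2) 1) ≠ Finsupp.single 1 1 := by
      intro h
      have := (Finsupp.single_eq_single_iff _ _ _ _).mp h
      simp at this
    have hs0 : (Finsupp.single (0 : Fin 2) 1) ≠ 0 := fun h =>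
      one_ne_zero (Finsupp.single_eq_zero.mp h)
    have hs1 : (Finsupp.single (1 : Fin 2) 1) ≠ 0 := fun h =>
      one_ne_zero (Finsupp.single_eq_zero.mp h)
    by_cases hm0 : m = 0
    · subst hm0
      rw [if_neg hs0, if_neg hs1, if_pos rfl]
      ring
    · by_cases hmA : m = Finsupp.single 0 1
      · subst hmA
        rw [if_pos rfl, if_neg (fun h => hne01 h.symm), if_neg (fun h => hs0 h.symm)]
        rw [← ha]
        ring
      · by_cases hmB : m = Finsupp.single 1 1
        · subst hmB
          rw [if_neg hne01, if_pos rfl, if_neg (fun h => hs1 h.symm)]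
          rw [← hb]
          ring
        · rw [if_neg (fun h => hmA h.symm), if_neg (fun h => hmB h.symm),
            if_neg (fun h => hm0 h.symm)]
          have hz : coeff m l = 0 := by
            by_contra hcm
            rcases hclass m hcm with h | h | h
            · exact hm0 h
            · exact hmA h
            · exact hmB h
          rw [hz]
          ring
  refine ⟨a, b, c, ?_, heq⟩
  rintro ⟨ha0, hb0⟩
  rw [ha0, hb0] at heq
  simp only [map_zero, zero_mul, zero_add] at heq
  rw [heq, totalDegree_C] at hl
  exact absurd hl zero_ne_one

lemma evalPt_linear (a b c : ℝ) (P : ℝ × ℝ) :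
    evalPt (C a * X 0 + C b * X 1 + C c) P = a * P.1 + b * P.2 + c := by
  simp [evalPt]

lemma evalPt_mul (p q : M) (P : ℝ × ℝ) : evalPt (p * q) P = evalPt p P * evalPt q P := by
  simp [evalPt]

lemma aeval_natDegree_le (g : Fin 2 → Polynomial ℝ) (hg : ∀ i, (g i).natDegree ≤ 1)
    (p : M) : (MvPolynomial.aeval g p).natDegree ≤ p.totalDegree := by
  conv_lhs => rw [p.as_sum]
  rw [map_sum]
  refine Polynomial.natDegree_sum_le_of_forall_le _ _ fun d hd => ?_
  rw [aeval_monomial]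
  refine Polynomial.natDegree_mul_le.trans ?_
  have h1 : (algebraMap ℝ (Polynomial ℝ) (coeff d p)).natDegree = 0 :=
    Polynomial.natDegree_C _
  rw [h1, zero_add]
  refine le_trans ?_ (le_totalDegree hd)
  rw [Finsupp.prod]
  refine (Polynomial.natDegree_prod_le _ _).trans ?_
  have : ∀ i ∈ d.support, ((g i) ^ (d i)).natDegree ≤ d i := by
    intro i _
    refine Polynomial.natDegree_pow_le.trans ?_
    calc d i * (g i).natDegree ≤ d i * 1 := Nat.mul_le_mul_left _ (hg i)
    _ = d i := Nat.mul_one _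
  refine (Finset.sum_le_sum this).trans ?_
  rfl

lemma mv_aeval_eq_eval (x : Fin 2 → ℝ) (q : M) :
    MvPolynomial.aeval x q = eval x q := by
  have h : (MvPolynomial.aeval x : M →ₐ[ℝ] ℝ) q
      = (RingHomClass.toRingHom (MvPolynomial.aeval x : M →ₐ[ℝ] ℝ) : M →+* ℝ) q := rfl
  rw [h, coe_aeval_eq_eval]

lemma eval_aeval (x : Fin 2 → ℝ) (s : Fin 2 → M) (p : M) :
    eval x (MvPolynomial.aeval s p) = eval (fun i => eval x (s i)) p := by
  have h := MvPolynomial.eval₂_comp_left (MvPolynomial.eval x) (algebraMap ℝ M) s p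
  have h1 : (MvPolynomial.eval x).comp (algebraMap ℝ M) = RingHom.id ℝ :=
    RingHom.ext fun r => by simp
  rw [h1] at h
  rw [MvPolynomial.aeval_def]
  exact h

lemma polyeval_aeval (t : ℝ) (g : Fin 2 → Polynomial ℝ) (p : M) :
    Polynomial.eval t (MvPolynomial.aeval g p) = eval (fun i => Polynomial.eval t (g i)) p := by
  have h := MvPolynomial.eval₂_comp_left (Polynomial.evalRingHom t)
    (algebraMap ℝ (Polynomial ℝ)) g p
  have h1 : (Polynomial.evalRingHom t).comp (algebraMap ℝ (Polynomial ℝ)) = RingHom.id ℝ :=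
    RingHom.ext fun r => by simp
  rw [h1] at h
  rw [MvPolynomial.aeval_def]
  exact h

lemma vanish_on_line {l : M} (hl : l.totalDegree = 1) {p : M} (S : Finset (ℝ × ℝ))
    (hSl : ∀ B ∈ S, evalPt l B = 0) (hSp : ∀ B ∈ S, evalPt p B = 0)
    (hcard : p.totalDegree < S.card) :
    ∀ P : ℝ × ℝ, evalPt l P = 0 → evalPt p P = 0 := by
  classical
  obtain ⟨a, b, c, hab, rfl⟩ := linear_exists hl
  set D : ℝ := a ^ 2 + b ^ 2 with hD
  have hD0 : D ≠ 0 := by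
    intro h
    exact hab ⟨by nlinarith [sq_nonneg a, sq_nonneg b], by nlinarith [sq_nonneg a, sq_nonneg b]⟩
  set P₀ : ℝ × ℝ := (-(a * c) / D, -(b * c) / D) with hP₀
  set φ : ℝ → ℝ × ℝ := fun t => (P₀.1 - b * t, P₀.2 + a * t) with hφ
  set τ : ℝ × ℝ → ℝ := fun B => (-b * (B.1 - P₀.1) + a * (B.2 - P₀.2)) / D with hτ
  have hline : ∀ B : ℝ × ℝ, evalPt (C a * X 0 + C b * X 1 + C c) B = 0 ↔
      a * B.1 + b * B.2 + c = 0 := by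
    intro B; rw [evalPt_linear]
  have hP0line : a * P₀.1 + b * P₀.2 + c = 0 := by
    rw [hP₀]
    field_simp
    ring
  have hφτ : ∀ B : ℝ × ℝ, a * B.1 + b * B.2 + c = 0 → φ (τ B) = B := by
    intro B hB
    have haw : a * (B.1 - P₀.1) + b * (B.2 - P₀.2) = 0 := by
      linear_combination hB - hP0line
    apply Prod.ext
    · show P₀.1 - b * ((-b * (B.1 - P₀.1) + a * (B.2 - P₀.2)) / D) = B.1
      have hkey : P₀.1 - b * ((-b * (B.1 - P₀.1) + a * (B.2 - P₀.2)) / D) - B.1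
          = (-a * (a * (B.1 - P₀.1) + b * (B.2 - P₀.2))) / D := by
        field_simp
        ring
      rw [haw, mul_zero, zero_div] at hkey
      linarith
    · show P₀.2 + a * ((-b * (B.1 - P₀.1) + a * (B.2 - P₀.2)) / D) = B.2
      have hkey : P₀.2 + a * ((-b * (B.1 - P₀.1) + a * (B.2 - P₀.2)) / D) - B.2
          = (-b * (a * (B.1 - P₀.1) + b * (B.2 - P₀.2))) / D := by
        field_simp
        ring
      rw [haw, mul_zero, zero_div] at hkey
      linarith
  set u : Polynomial ℝ := MvPolynomial.aeval
    ![Polynomial.C P₀.1 - Polynomial.C b * Polynomial.X,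
      Polynomial.C P₀.2 + Polynomial.C a * Polynomial.X] p with hu
  have hueval : ∀ t : ℝ, u.eval t = evalPt p (φ t) := by
    intro t
    have harg : (fun i => Polynomial.eval t
        (![Polynomial.C P₀.1 - Polynomial.C b * Polynomial.X,
           Polynomial.C P₀.2 + Polynomial.C a * Polynomial.X] i)) = ![(φ t).1, (φ t).2] := by
      funext i
      fin_cases i <;> simp [hφ]
    rw [hu, polyeval_aeval, harg]
    rfl
  have hudeg : u.natDegree ≤ p.totalDegree := by
    refine aeval_natDegree_le _ (fun i => ?_) p
    fin_cases i <;>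
      simp only [Matrix.cons_val_zero, Matrix.cons_val_one, Matrix.head_cons]
    · refine (Polynomial.natDegree_sub_le _ _).trans (max_le ?_ ?_)
      · simp
      · refine Polynomial.natDegree_mul_le.trans ?_
        simp
    · refine (Polynomial.natDegree_add_le _ _).trans (max_le ?_ ?_)
      · simp
      · refine Polynomial.natDegree_mul_le.trans ?_
        simp
  have hinj : Set.InjOn τ S := by
    intro B hB B' hB' hEq
    have h1 := hφτ B ((hline B).mp (hSl B hB))
    have h2 := hφτ B' ((hline B').mp (hSl B' hB'))
    rw [← h1, ← h2, hEq]
  have hu0 : u = 0 := by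
    refine Polynomial.eq_zero_of_natDegree_lt_card_of_eval_eq_zero' u (S.image τ) ?_ ?_
    · intro t ht
      obtain ⟨B, hB, rfl⟩ := Finset.mem_image.mp ht
      rw [hueval, hφτ B ((hline B).mp (hSl B hB))]
      exact hSp B hB
    · rw [Finset.card_image_of_injOn hinj]
      exact lt_of_le_of_lt hudeg hcard
  intro P hP
  have h1 := hφτ P ((hline P).mp hP)
  have := hueval (τ P)
  rw [hu0, h1] at this
  simpa using this.symm

lemma dvd_of_vanish {l : M} (hl : l.totalDegree = 1) {p : M}
    (hp : ∀ P : ℝ × ℝ, evalPt l P = 0 → evalPt p P = 0) : l ∣ p := by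
  classical
  obtain ⟨a, b, c, hab, hleq⟩ := linear_exists hl
  set D : ℝ := a ^ 2 + b ^ 2 with hD
  have hD0 : D ≠ 0 := by
    intro h
    exact hab ⟨by nlinarith [sq_nonneg a, sq_nonneg b], by nlinarith [sq_nonneg a, sq_nonneg b]⟩
  set s : Fin 2 → M := ![X 0 - C (a / D) * l, X 1 - C (b / D) * l] with hs
  have hXs : ∀ i : Fin 2, l ∣ (X i - s i) := by
    intro i
    fin_cases i
    · refine ⟨C (a / D), ?_⟩; simp [hs]; ring
    · refine ⟨C (b / D), ?_⟩; simp [hs]; ring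
  have hdiv : ∀ q : M, l ∣ (q - MvPolynomial.aeval s q) := by
    intro q
    induction q using MvPolynomial.induction_on with
    | C r => simp [MvPolynomial.aeval_C]
    | add q r hq hr =>
        rw [map_add]
        have : q + r - (MvPolynomial.aeval s q + MvPolynomial.aeval s r)
            = (q - MvPolynomial.aeval s q) + (r - MvPolynomial.aeval s r) := by ring
        rw [this]
        exact dvd_add hq hr
    | mul_X q i hq =>
        rw [map_mul, MvPolynomial.aeval_X]
        have : q * X i - MvPolynomial.aeval s q * s i
            = (q - MvPolynomial.aeval s q) * X i
              + MvPolynomial.aeval s q * (X i - s i) := by ring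
        rw [this]
        exact dvd_add (hq.mul_right _) ((hXs i).mul_left _)
  have hzero : MvPolynomial.aeval s p = 0 := by
    apply MvPolynomial.funext
    intro x
    rw [eval_aeval, map_zero]
    have hsx0 : eval x (s 0) = x 0 - (a / D) * eval x l := by simp [hs]
    have hsx1 : eval x (s 1) = x 1 - (b / D) * eval x l := by simp [hs]
    have hlx : eval x l = a * x 0 + b * x 1 + c := by
      rw [hleq]; simp
    set Q : ℝ × ℝ := (eval x (s 0), eval x (s 1)) with hQ
    have hQl : evalPt l Q = 0 := by
      rw [hleq, evalPt_linear, hQ]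
      simp only [hsx0, hsx1, hlx]
      field_simp
      ring
    have hpQ := hp Q hQl
    have harg : (fun i => eval x (s i)) = ![Q.1, Q.2] := by
      funext i
      fin_cases i <;> simp [hQ]
    rw [harg]
    exact hpQ
  have := hdiv p
  rwa [hzero, sub_zero] at this

lemma linear_ne_zero {l : M} (hl : l.totalDegree = 1) : l ≠ 0 := by
  intro h
  rw [h, totalDegree_zero] at hl
  exact zero_ne_one hl

lemma eq_C_of_td_zero {q : M} (h : q.totalDegree = 0) : q = C (coeff 0 q) := by
  classical
  apply MvPolynomial.ext
  intro m
  rw [coeff_C]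
  by_cases hm : m = 0
  · rw [if_pos hm.symm, hm]
  · rw [if_neg (fun hh => hm hh.symm)]
    by_contra hc
    have hmem : m ∈ q.support := mem_support_iff.mpr hc
    have := (totalDegree_eq_zero_iff _ q).mp h m hmem
    exact hm (Finsupp.ext fun i => this i)

lemma linear_not_unit {l : M} (hl : l.totalDegree = 1) : ¬ IsUnit l := by
  intro h
  obtain ⟨v, hv⟩ := IsUnit.exists_right_inv h
  have hl0 : l ≠ 0 := linear_ne_zero hl
  have hv0 : v ≠ 0 := by
    intro h0; rw [h0, mul_zero] at hv; exact zero_ne_one hv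
  have := td_mul hl0 hv0
  rw [hv, totalDegree_one, hl] at this
  omega

lemma linear_irreducible {l : M} (hl : l.totalDegree = 1) : Irreducible l := by
  refine ⟨linear_not_unit hl, fun u v huv => ?_⟩
  have hl0 : l ≠ 0 := linear_ne_zero hl
  have hu0 : u ≠ 0 := by rintro rfl; rw [zero_mul] at huv; exact hl0 huv
  have hv0 : v ≠ 0 := by rintro rfl; rw [mul_zero] at huv; exact hl0 huv
  have hsum : u.totalDegree + v.totalDegree = 1 := by
    rw [← td_mul hu0 hv0, ← huv, hl]
  have hUnitOfC : ∀ w : M, w ≠ 0 → w.totalDegree = 0 → IsUnit w := by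
    intro w hw0 hw
    obtain ⟨r, hr0, hwc⟩ : ∃ r : ℝ, r ≠ 0 ∧ w = C r := by
      refine ⟨coeff 0 w, ?_, eq_C_of_td_zero hw⟩
      intro h
      apply hw0
      rw [eq_C_of_td_zero hw, h, map_zero]
    rw [hwc]
    exact IsUnit.of_mul_eq_one (C r⁻¹)
      (by rw [← map_mul, mul_inv_cancel₀ hr0, map_one])
  rcases Nat.eq_zero_or_pos u.totalDegree with h | h
  · exact Or.inl (hUnitOfC u hu0 h)
  · exact Or.inr (hUnitOfC v hv0 (by omega))

lemma linear_prime {l : M} (hl : l.totalDegree = 1) : Prime l :=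
  (UniqueFactorizationMonoid.irreducible_iff_prime).mp (linear_irreducible hl)

end DJR

/-- `l`-disjoint reduction: if a maximal line `lam` meets the line `l`
at no node of `X`, then `Xˡ = (X \ lam)ˡ`. -/
theorem disjoint_reduction
    (n : ℕ) (hn : 1 ≤ n) (X : Finset (ℝ × ℝ)) (hX : NCorrect n X)
    (l : MvPolynomial (Fin 2) ℝ) (hl : IsLinearPoly l)
    (hk : (X.filter (fun A => OnLine l A)).card ≤ n)
    (lam : MvPolynomial (Fin 2) ℝ) (hlam : IsMaximalLine n X lam)
    (hdisj : ∀ A ∈ X, ¬(OnLine lam A ∧ OnLine l A)) :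
    UsedSet n X l = UsedSet (n - 1) (X.filter (fun A => ¬ OnLine lam A)) l := by
  classical
  obtain ⟨hlamlin, hlamcard⟩ := hlam
  have hlam_ne : ∀ B ∈ X, OnLine lam B → evalPt l B ≠ 0 := by
    intro B hB hBlam h
    exact hdisj B hB ⟨hBlam, h⟩
  ext A
  simp only [UsedSet, Finset.mem_filter]
  constructor
  · rintro ⟨hA, p, ⟨hpdeg, hpA, hpz⟩, hlp⟩
    have hp0 : p ≠ 0 := by
      intro h
      rw [h] at hpA
      simp [evalPt] at hpA
    by_cases hAlam : OnLine lam A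
    · exfalso
      obtain ⟨p₁, rfl⟩ := hlp
      have hp₁0 : p₁ ≠ 0 := right_ne_zero_of_mul hp0
      have hl0 : l ≠ 0 := DJR.linear_ne_zero hl
      have hdeg₁ : p₁.totalDegree < n := by
        have h := DJR.td_mul hl0 hp₁0
        rw [show l.totalDegree = 1 from hl] at h
        omega
      set S := (X.filter (fun B => OnLine lam B)).erase A with hS
      have hScard : S.card = n := by
        rw [hS, Finset.card_erase_of_mem (Finset.mem_filter.mpr ⟨hA, hAlam⟩), hlamcard]
        omega
      have hvan := DJR.vanish_on_line hlamlin S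
        (fun B hB => (Finset.mem_filter.mp (Finset.mem_of_mem_erase hB)).2)
        (fun B hB => by
          have hBA : B ≠ A := Finset.ne_of_mem_erase hB
          have hBmem := Finset.mem_of_mem_erase hB
          have hBX : B ∈ X := (Finset.mem_filter.mp hBmem).1
          have hBlam : OnLine lam B := (Finset.mem_filter.mp hBmem).2
          have h0 := hpz B hBX hBA
          rw [DJR.evalPt_mul] at h0
          rcases mul_eq_zero.mp h0 with h | h
          · exact absurd h (hlam_ne B hBX hBlam)
          · exact h)
        (hScard ▸ hdeg₁)
      have hA0 : evalPt p₁ A = 0 := hvan A hAlam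
      rw [DJR.evalPt_mul, hA0, mul_zero] at hpA
      exact zero_ne_one hpA
    · refine ⟨⟨hA, hAlam⟩, ?_⟩
      set S := X.filter (fun B => OnLine lam B) with hS
      have hvanP := DJR.vanish_on_line hlamlin S
        (fun B hB => (Finset.mem_filter.mp hB).2)
        (fun B hB => by
          have hBX : B ∈ X := (Finset.mem_filter.mp hB).1
          have hBlam : OnLine lam B := (Finset.mem_filter.mp hB).2
          have hBA : B ≠ A := by
            rintro rfl
            exact hAlam hBlam
          exact hpz B hBX hBA)
        (by rw [hlamcard]; omega)
      obtain ⟨q, rfl⟩ := DJR.dvd_of_vanish hlamlin hvanP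
      have hlam0 : lam ≠ 0 := DJR.linear_ne_zero hlamlin
      have hq0 : q ≠ 0 := right_ne_zero_of_mul hp0
      have hqdeg : q.totalDegree ≤ n - 1 := by
        have h := DJR.td_mul hlam0 hq0
        rw [show lam.totalDegree = 1 from hlamlin] at h
        omega
      have hlamA : evalPt lam A ≠ 0 := hAlam
      refine ⟨MvPolynomial.C (evalPt lam A) * q, ⟨?_, ?_, ?_⟩, ?_⟩
      · refine (MvPolynomial.totalDegree_mul _ _).trans ?_
        rw [MvPolynomial.totalDegree_C, zero_add]
        exact hqdeg
      · rw [DJR.evalPt_mul] at hpA ⊢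
        rw [show evalPt (MvPolynomial.C (evalPt lam A)) A = evalPt lam A by simp [evalPt]]
        exact hpA
      · intro B hB hBA
        have hBX : B ∈ X := (Finset.mem_filter.mp hB).1
        have hBlam : ¬ OnLine lam B := (Finset.mem_filter.mp hB).2
        have h0 := hpz B hBX hBA
        rw [DJR.evalPt_mul] at h0
        rcases mul_eq_zero.mp h0 with h | h
        · exact absurd h hBlam
        · rw [DJR.evalPt_mul, h, mul_zero]
      · have hprime := DJR.linear_prime hl
        have hnd : ¬ l ∣ lam := by
          rintro ⟨u, hu⟩
          have hu0 : u ≠ 0 := by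
            rintro rfl
            rw [mul_zero] at hu
            exact hlam0 hu
          have hl0 : l ≠ 0 := DJR.linear_ne_zero hl
          have htd : u.totalDegree = 0 := by
            have h := DJR.td_mul hl0 hu0
            rw [← hu, show lam.totalDegree = 1 from hlamlin, show l.totalDegree = 1 from hl] at h
            omega
          have huc := DJR.eq_C_of_td_zero htd
          have hr : MvPolynomial.coeff 0 u ≠ 0 := by
            intro h
            rw [h, map_zero] at huc
            exact hu0 huc
          obtain ⟨B, hB⟩ : (X.filter (fun B => OnLine lam B)).Nonempty := by
            rw [← Finset.card_pos, hlamcard]; omega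
          have hBX : B ∈ X := (Finset.mem_filter.mp hB).1
          have hBlam : OnLine lam B := (Finset.mem_filter.mp hB).2
          have hlB : evalPt l B = 0 := by
            have h0 : evalPt lam B = 0 := hBlam
            rw [hu, DJR.evalPt_mul] at h0
            rcases mul_eq_zero.mp h0 with h | h
            · exact h
            · exfalso
              rw [huc] at h
              simp [evalPt] at h
              exact hr h
          exact hdisj B hBX ⟨hBlam, hlB⟩
        have hlq : l ∣ q := by
          rcases (hprime.dvd_mul).mp hlp with h | h
          · exact absurd h hnd
          · exact h
        exact hlq.mul_left _
  · rintro ⟨hA', q, ⟨hqdeg, hqA, hqz⟩, hlq⟩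
    have hA : A ∈ X := hA'.1
    have hAlam : ¬ OnLine lam A := hA'.2
    have hlamA : evalPt lam A ≠ 0 := hAlam
    refine ⟨hA, MvPolynomial.C (evalPt lam A)⁻¹ * lam * q, ⟨?_, ?_, ?_⟩, ?_⟩
    · refine (MvPolynomial.totalDegree_mul _ _).trans ?_
      have h1 : (MvPolynomial.C (evalPt lam A)⁻¹ * lam).totalDegree ≤ 1 := by
        refine (MvPolynomial.totalDegree_mul _ _).trans ?_
        rw [MvPolynomial.totalDegree_C, zero_add, show lam.totalDegree = 1 from hlamlin]
      omega
    · rw [DJR.evalPt_mul, DJR.evalPt_mul, hqA, mul_one,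
        show evalPt (MvPolynomial.C (evalPt lam A)⁻¹) A = (evalPt lam A)⁻¹ by simp [evalPt]]
      exact inv_mul_cancel₀ hlamA
    · intro B hB hBA
      rw [DJR.evalPt_mul, DJR.evalPt_mul]
      by_cases hBlam : OnLine lam B
      · rw [show evalPt lam B = 0 from hBlam]
        ring
      · rw [hqz B (Finset.mem_filter.mpr ⟨hB, hBlam⟩) hBA, mul_zero]
    · exact hlq.mul_left _
end

section
/- Let X be an n-correct set and ℓ a line containing at most n nodes of X. If λ′ and λ″ are two maximal lines of X such that λ′ ∩ λ″ ∩ ℓ is a node of X (ℓ-adjoint maximal lines), then X^ℓ = (X \ (λ′ ∪ λ″))^ℓ. -/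
attribute [local instance] Classical.propDecidable

/-! ### Auxiliary lemmas -/

open MvPolynomial

lemma evalPt_mul (p q : MvPolynomial (Fin 2) ℝ) (A : ℝ × ℝ) :
    evalPt (p * q) A = evalPt p A * evalPt q A := by simp [evalPt]

lemma fin2_ext {m m' : Fin 2 →₀ ℕ} (h0 : m 0 = m' 0) (h1 : m 1 = m' 1) : m = m' := by
  ext i
  fin_cases i <;> assumption

lemma deg2' (m : Fin 2 →₀ ℕ) : (∑ i ∈ m.support, m i) = m 0 + m 1 := by
  rw [Finset.sum_subset (Finset.subset_univ m.support) (by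
    intro x _ hx
    simpa using Finsupp.notMem_support_iff.mp hx)]
  exact Fin.sum_univ_two m

lemma deg2 (m : Fin 2 →₀ ℕ) : (m.sum fun _ e => e) = m 0 + m 1 := deg2' m

lemma linear_form {l : MvPolynomial (Fin 2) ℝ} (hl : IsLinearPoly l) :
    ∃ a b c : ℝ, ¬(a = 0 ∧ b = 0) ∧ l = C a * X 0 + C b * X 1 + C c := by
  refine ⟨coeff (Finsupp.single 0 1) l, coeff (Finsupp.single 1 1) l, coeff 0 l, ?_, ?_⟩
  · rintro ⟨ha, hb⟩
    have h0 : l = C (coeff 0 l) := by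
      apply MvPolynomial.ext
      intro m
      rcases eq_or_ne m 0 with rfl | hm
      · simp
      · rw [coeff_C, if_neg (Ne.symm hm)]
        by_contra hc
        have hmem : m ∈ l.support := by simpa using hc
        have hle := le_totalDegree hmem
        rw [hl, deg2] at hle
        -- m 0 + m 1 ≤ 1, m ≠ 0
        have h1 : m 0 + m 1 = 1 := by
          rcases Nat.lt_or_ge (m 0 + m 1) 1 with h | h
          · exfalso
            refine hm (fin2_ext ?_ ?_) <;> simp <;> omega
          · omega
        rcases Nat.eq_zero_or_pos (m 0) with h00 | h00
        · have : m = Finsupp.single 1 1 := fin2_ext (by simp [h00]) (by simp; omega)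
          rw [this] at hc; exact hc hb
        · have : m = Finsupp.single 0 1 := fin2_ext (by simp; omega) (by simp; omega)
          rw [this] at hc; exact hc ha
    rw [h0] at hl
    simp [IsLinearPoly, totalDegree_C] at hl
  · apply MvPolynomial.ext
    intro m
    have hX : ∀ (i : Fin 2) (a : ℝ), coeff m (C a * X i) = if Finsupp.single i 1 = m then a else 0 := by
      intro i a
      rw [coeff_C_mul, coeff_X']
      split <;> simp
    rw [coeff_add, coeff_add, hX, hX, coeff_C]
    by_cases h2 : m 0 + m 1 ≤ 1
    · rcases Nat.eq_zero_or_pos (m 0) with h00 | h00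
      · rcases Nat.eq_zero_or_pos (m 1) with h10 | h10
        · have hm : m = 0 := fin2_ext (by simpa using h00) (by simpa using h10)
          subst hm
          have : (Finsupp.single (0:Fin 2) 1) ≠ (0 : Fin 2 →₀ ℕ) := by
            intro h; simpa using DFunLike.congr_fun h 0
          have h1 : (Finsupp.single (1:Fin 2) 1) ≠ (0 : Fin 2 →₀ ℕ) := by
            intro h; simpa using DFunLike.congr_fun h 1
          simp [this, h1]
        · have hm : m = Finsupp.single 1 1 := fin2_ext (by simp [h00]) (by simp; omega)
          subst hm
          have e1 : Finsupp.single (0:Fin 2) 1 ≠ Finsupp.single (1:Fin 2) 1 := by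
            intro h; simpa using DFunLike.congr_fun h 0
          have e2 : (0 : Fin 2 →₀ ℕ) ≠ Finsupp.single (1:Fin 2) 1 := by
            intro h; simpa using DFunLike.congr_fun h 1
          rw [if_neg e1, if_neg e2]
          simp
      · have hm : m = Finsupp.single 0 1 := fin2_ext (by simp; omega) (by simp; omega)
        subst hm
        have e1 : Finsupp.single (1:Fin 2) 1 ≠ Finsupp.single (0:Fin 2) 1 := by
          intro h; simpa using DFunLike.congr_fun h 1
        have e2 : (0 : Fin 2 →₀ ℕ) ≠ Finsupp.single (0:Fin 2) 1 := by
          intro h; simpa using DFunLike.congr_fun h 0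
        rw [if_neg e1, if_neg e2]
        simp
    · -- degree ≥ 2 : all zero
      have hc : coeff m l = 0 := by
        apply coeff_eq_zero_of_totalDegree_lt
        rw [hl, deg2']; omega
      have e0 : Finsupp.single (0:Fin 2) 1 ≠ m := by
        intro h
        have := DFunLike.congr_fun h 0
        have := DFunLike.congr_fun h 1
        simp at *; omega
      have e1 : Finsupp.single (1:Fin 2) 1 ≠ m := by
        intro h
        have := DFunLike.congr_fun h 0
        have := DFunLike.congr_fun h 1
        simp at *; omega
      have e2 : (0:Fin 2 →₀ ℕ) ≠ m := by
        intro h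
        have := DFunLike.congr_fun h 0
        have := DFunLike.congr_fun h 1
        simp at *; omega
      rw [hc, if_neg e0, if_neg e1, if_neg e2]
      simp

lemma evalPt_linear (a b c : ℝ) (A : ℝ × ℝ) :
    evalPt (C a * X 0 + C b * X 1 + C c) A = a * A.1 + b * A.2 + c := by
  simp [evalPt]

open MvPolynomial

lemma eval_aeval' (v : Fin 2 → ℝ) (f : Fin 2 → MvPolynomial (Fin 2) ℝ)
    (p : MvPolynomial (Fin 2) ℝ) :
    eval v (aeval f p) = eval (fun i => eval v (f i)) p := by
  rw [aeval_def, eval_eval₂]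
  have h : (eval v).comp (algebraMap ℝ (MvPolynomial (Fin 2) ℝ)) = RingHom.id ℝ := by
    ext r; simp [algebraMap_eq]
  rw [h, eval₂_id]

lemma X1_dvd_sub (q : MvPolynomial (Fin 2) ℝ) :
    (X 1 : MvPolynomial (Fin 2) ℝ) ∣ (q - aeval ![X 0, 0] q) := by
  induction q using MvPolynomial.induction_on with
  | C a => simp [algebraMap_eq]
  | add p q hp hq =>
      have h : (p + q) - aeval ![X 0, 0] (p + q)
          = (p - aeval ![X 0, 0] p) + (q - aeval ![X 0, 0] q) := by
        rw [map_add]; ring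
      rw [h]; exact dvd_add hp hq
  | mul_X p i hp =>
      fin_cases i
      · show (X 1 : MvPolynomial (Fin 2) ℝ) ∣ p * X 0 - aeval ![X 0, 0] (p * X 0)
        have h : (p * X 0) - aeval ![X 0, 0] (p * X 0)
            = (p - aeval ![X 0, 0] p) * X 0 := by
          rw [map_mul, aeval_X]
          simp only [Matrix.cons_val_zero]
          ring
        rw [h]; exact (hp).mul_right _
      · show (X 1 : MvPolynomial (Fin 2) ℝ) ∣ p * X 1 - aeval ![X 0, 0] (p * X 1)
        have h : (p * X 1) - aeval ![X 0, 0] (p * X 1) = p * X 1 := by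
          rw [map_mul, aeval_X]
          simp
        rw [h]; exact Dvd.intro_left p rfl

lemma X1_dvd_of_eval {q : MvPolynomial (Fin 2) ℝ} (h : ∀ x : ℝ, eval ![x, 0] q = 0) :
    (X 1 : MvPolynomial (Fin 2) ℝ) ∣ q := by
  have h0 : aeval ![X 0, (0 : MvPolynomial (Fin 2) ℝ)] q = 0 := by
    apply MvPolynomial.funext (q := 0)
    intro v
    rw [eval_aeval', map_zero]
    have hw : (fun i => eval v (![X 0, (0 : MvPolynomial (Fin 2) ℝ)] i)) = ![v 0, 0] := by
      funext i; fin_cases i <;> simp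
    rw [hw]; exact h (v 0)
  have := X1_dvd_sub q
  rwa [h0, sub_zero] at this

lemma natDegree_aeval_le (f : Fin 2 → Polynomial ℝ) (hf : ∀ i, (f i).natDegree ≤ 1)
    (p : MvPolynomial (Fin 2) ℝ) :
    (MvPolynomial.aeval f p).natDegree ≤ p.totalDegree := by
  conv_lhs => rw [p.as_sum]
  rw [map_sum]
  apply Polynomial.natDegree_sum_le_of_forall_le
  intro v hv
  rw [aeval_monomial]
  refine le_trans (Polynomial.natDegree_mul_le) ?_
  have h1 : (algebraMap ℝ (Polynomial ℝ) (coeff v p)).natDegree = 0 := by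
    simp [Polynomial.natDegree_C]
  rw [h1, zero_add]
  refine le_trans ?_ (le_totalDegree hv)
  rw [Finsupp.prod, Finsupp.sum]
  refine le_trans (Polynomial.natDegree_prod_le _ _) ?_
  apply Finset.sum_le_sum
  intro i _
  refine le_trans (Polynomial.natDegree_pow_le) ?_
  calc v i * (f i).natDegree ≤ v i * 1 := Nat.mul_le_mul_left _ (hf i)
    _ = v i := Nat.mul_one _

lemma line_dvd_aux (d : ℕ) (p : MvPolynomial (Fin 2) ℝ) (a b c : ℝ) (hb : b ≠ 0)
    (hdeg : p.totalDegree ≤ d) (S : Finset (ℝ × ℝ))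
    (hcard : d + 1 ≤ S.card)
    (hon : ∀ A ∈ S, a * A.1 + b * A.2 + c = 0)
    (hvan : ∀ A ∈ S, evalPt p A = 0) :
    (C a * X 0 + C b * X 1 + C c) ∣ p := by
  -- the univariate restriction to the line
  set f : Fin 2 → Polynomial ℝ :=
    ![Polynomial.X, Polynomial.C (-c/b) + Polynomial.C (-a/b) * Polynomial.X] with hf
  have hfdeg : ∀ i, (f i).natDegree ≤ 1 := by
    intro i; fin_cases i
    · simp [hf]
    · simp only [hf, Matrix.cons_val_one, Matrix.head_cons]
      refine le_trans (Polynomial.natDegree_add_le _ _) ?_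
      simp [Polynomial.natDegree_C]
      refine le_trans (Polynomial.natDegree_mul_le) ?_
      simp [Polynomial.natDegree_C]
  set Q : Polynomial ℝ := aeval f p with hQ
  have hQeval : ∀ x : ℝ, Q.eval x = eval ![x, -c/b + (-a/b) * x] p := by
    intro x
    rw [hQ, aeval_def, polynomial_eval_eval₂]
    have h : (Polynomial.evalRingHom x).comp (algebraMap ℝ (Polynomial ℝ)) = RingHom.id ℝ := by
      ext r; simp
    rw [h, eval₂_id]
    have hw : (fun s => Polynomial.eval x (f s)) = ![x, -c/b + (-a/b) * x] := by
      funext i; fin_cases i <;> simp [hf]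
    rw [hw]
  have hy : ∀ A ∈ S, -c/b + (-a/b) * A.1 = A.2 := by
    intro A hA
    have h := hon A hA
    field_simp
    linear_combination -h
  have hQ0 : Q = 0 := by
    apply Polynomial.eq_zero_of_natDegree_lt_card_of_eval_eq_zero' Q (S.image Prod.fst)
    · intro x hx
      obtain ⟨A, hA, rfl⟩ := Finset.mem_image.mp hx
      rw [hQeval, hy A hA]
      have := hvan A hA
      simpa [evalPt] using this
    · have hinj : Set.InjOn Prod.fst (↑S : Set (ℝ × ℝ)) := by
        intro A hA B hB hAB
        have h2 : A.2 = B.2 := by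
          have h1 := hy A hA
          have h2 := hy B hB
          rw [hAB] at h1
          rw [← h1, ← h2]
        exact Prod.ext hAB h2
      rw [Finset.card_image_of_injOn hinj]
      calc Q.natDegree ≤ p.totalDegree := natDegree_aeval_le f hfdeg p
        _ ≤ d := hdeg
        _ < d + 1 := Nat.lt_succ_self d
        _ ≤ S.card := hcard
  -- the change of variables
  set g : Fin 2 → MvPolynomial (Fin 2) ℝ :=
    ![X 0, C b⁻¹ * (X 1 - C a * X 0 - C c)] with hg
  set h : Fin 2 → MvPolynomial (Fin 2) ℝ :=
    ![X 0, C b * X 1 + C a * X 0 + C c] with hh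
  have hCb : (C b⁻¹ : MvPolynomial (Fin 2) ℝ) * C b = 1 := by
    rw [← C_mul, inv_mul_cancel₀ hb, C_1]
  have hcomp : ∀ q : MvPolynomial (Fin 2) ℝ, aeval h (aeval g q) = q := by
    intro q
    have heq : (aeval h).comp (aeval g) =
        (AlgHom.id ℝ (MvPolynomial (Fin 2) ℝ)) := by
      apply MvPolynomial.algHom_ext
      intro i
      fin_cases i
      · show (aeval h) ((aeval g) (X 0)) = X 0
        simp [hg, hh]
      · show (aeval h) ((aeval g) (X 1)) = X 1
        simp only [aeval_X, hg, hh,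
          Matrix.cons_val_one, Matrix.head_cons, map_mul, map_sub, map_add, aeval_C,
          Matrix.cons_val_zero, algebraMap_eq]
        linear_combination (X 1 : MvPolynomial (Fin 2) ℝ) * hCb
    calc aeval h (aeval g q) = ((aeval h).comp (aeval g)) q := rfl
      _ = q := by rw [heq]; rfl
  have hXdvd : (X 1 : MvPolynomial (Fin 2) ℝ) ∣ aeval g p := by
    apply X1_dvd_of_eval
    intro x
    rw [eval_aeval']
    have hw : (fun i => eval ![x, 0] (g i)) = ![x, b⁻¹ * (0 - a * x - c)] := by
      funext i; fin_cases i <;> simp [hg]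
    rw [hw]
    have hsc : b⁻¹ * (0 - a * x - c) = -c/b + (-a/b) * x := by ring
    rw [hsc, ← hQeval, hQ0, Polynomial.eval_zero]
  obtain ⟨s, hs⟩ := hXdvd
  refine ⟨aeval h s, ?_⟩
  have := congrArg (aeval h) hs
  rw [hcomp p, map_mul, aeval_X] at this
  rw [this]
  congr 1
  simp only [hh, Matrix.cons_val_one, Matrix.head_cons, Matrix.cons_val_zero]
  ring

open MvPolynomial


lemma line_dvd {p l : MvPolynomial (Fin 2) ℝ} (d : ℕ) (hl : IsLinearPoly l)
    (hdeg : p.totalDegree ≤ d) (S : Finset (ℝ × ℝ)) (hcard : d + 1 ≤ S.card)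
    (hon : ∀ A ∈ S, evalPt l A = 0) (hvan : ∀ A ∈ S, evalPt p A = 0) : l ∣ p := by
  obtain ⟨a, b, c, hab, rfl⟩ := linear_form hl
  have hon' : ∀ A ∈ S, a * A.1 + b * A.2 + c = 0 := by
    intro A hA; have := hon A hA; rwa [evalPt_linear] at this
  by_cases hb : b ≠ 0
  · exact line_dvd_aux d p a b c hb hdeg S hcard hon' hvan
  · push_neg at hb
    subst hb
    have ha : a ≠ 0 := fun h => hab ⟨h, rfl⟩
    have hswap : ∀ (q : MvPolynomial (Fin 2) ℝ) (x y : ℝ),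
        eval ![x, y] (rename (Equiv.swap (0:Fin 2) 1) q) = eval ![y, x] q := by
      intro q x y
      rw [eval_rename]
      have hw : (![x, y] ∘ (Equiv.swap (0:Fin 2) 1)) = ![y, x] := by
        funext i; fin_cases i <;>
          simp [Equiv.swap_apply_left, Equiv.swap_apply_right]
      rw [hw]
    have hinv : ∀ q : MvPolynomial (Fin 2) ℝ,
        rename (Equiv.swap (0:Fin 2) 1) (rename (Equiv.swap (0:Fin 2) 1) q) = q := by
      intro q
      rw [rename_rename]
      have hw : ((Equiv.swap (0:Fin 2) 1) ∘ (Equiv.swap (0:Fin 2) 1)) = id := by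
        funext i; simp
      rw [hw, rename_id, AlgHom.id_apply]
    have hdegsw : ∀ q : MvPolynomial (Fin 2) ℝ,
        (rename (Equiv.swap (0:Fin 2) 1) q).totalDegree = q.totalDegree := by
      intro q
      refine le_antisymm (totalDegree_rename_le _ _) ?_
      conv_lhs => rw [← hinv q]
      exact totalDegree_rename_le _ _
    have hl' : rename (Equiv.swap (0:Fin 2) 1) (C a * X 0 + C (0:ℝ) * X 1 + C c)
        = C (0:ℝ) * X 0 + C a * X 1 + C c := by
      simp only [map_add, map_mul, rename_C, rename_X, Equiv.swap_apply_left]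
      ring_nf
      simp
    have hdvd : (C (0:ℝ) * X 0 + C a * X 1 + C c) ∣
        rename (Equiv.swap (0:Fin 2) 1) p := by
      apply line_dvd_aux d _ 0 a c ha (by rw [hdegsw]; exact hdeg) (S.image Prod.swap)
      · rwa [Finset.card_image_of_injective _ Prod.swap_injective]
      · intro A hA
        obtain ⟨B, hB, rfl⟩ := Finset.mem_image.mp hA
        have := hon' B hB
        simp only [Prod.swap_prod_mk, Prod.fst_swap, Prod.snd_swap]
        linarith
      · intro A hA
        obtain ⟨B, hB, rfl⟩ := Finset.mem_image.mp hA
        have := hvan B hB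
        rw [evalPt] at this ⊢
        simp only [Prod.fst_swap, Prod.snd_swap]
        rw [hswap]
        exact this
    rw [← hl'] at hdvd
    obtain ⟨t, ht⟩ := hdvd
    refine ⟨rename (Equiv.swap (0:Fin 2) 1) t, ?_⟩
    have := congrArg (rename (Equiv.swap (0:Fin 2) 1)) ht
    rwa [hinv, map_mul, hinv] at this

lemma degree_attained {q : MvPolynomial (Fin 2) ℝ} (hq : q ≠ 0) :
    ∃ m ∈ q.support, Finsupp.degree m = q.totalDegree := by
  obtain ⟨m, hm, he⟩ := Finset.exists_mem_eq_sup q.support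
    (Finset.nonempty_iff_ne_empty.mpr (mt MvPolynomial.support_eq_empty.mp hq)) (fun m : Fin 2 →₀ ℕ => m.sum fun _ e => e)
  exact ⟨m, hm, by rw [MvPolynomial.totalDegree, he]; rfl⟩

lemma degree_fin2 (m : Fin 2 →₀ ℕ) : Finsupp.degree m = m 0 + m 1 := deg2' m

lemma le_totalDegree_mul {p q : MvPolynomial (Fin 2) ℝ} (hp : p ≠ 0) (hq : q ≠ 0) :
    p.totalDegree + q.totalDegree ≤ (p * q).totalDegree := by
  set dp := p.totalDegree with hdp
  set dq := q.totalDegree with hdq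
  set P := homogeneousComponent dp p with hP
  set Q := homogeneousComponent dq q with hQ
  have hPne : P ≠ 0 := by
    obtain ⟨m, hm, he⟩ := degree_attained hp
    intro h0
    have := coeff_homogeneousComponent (σ := Fin 2) (R := ℝ) dp p m
    rw [← hP, h0, if_pos he] at this
    exact (mem_support_iff.mp hm) this.symm
  have hQne : Q ≠ 0 := by
    obtain ⟨m, hm, he⟩ := degree_attained hq
    intro h0
    have := coeff_homogeneousComponent (σ := Fin 2) (R := ℝ) dq q m
    rw [← hQ, h0, if_pos he] at this
    exact (mem_support_iff.mp hm) this.symm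
  have hPQne : P * Q ≠ 0 := mul_ne_zero hPne hQne
  have hhom : (P * Q).IsHomogeneous (dp + dq) :=
    (homogeneousComponent_isHomogeneous dp p).mul (homogeneousComponent_isHomogeneous dq q)
  obtain ⟨m, hm⟩ := Finset.Nonempty.exists_mem (Finset.nonempty_iff_ne_empty.mpr (mt MvPolynomial.support_eq_empty.mp hPQne))
  have hmd : Finsupp.degree m = dp + dq := by
    by_contra hc
    exact mem_support_iff.mp hm (hhom.coeff_eq_zero hc)
  have hcoeff : coeff m (p * q) = coeff m (P * Q) := by
    rw [coeff_mul, coeff_mul]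
    apply Finset.sum_congr rfl
    rintro ⟨u, v⟩ huv
    have huvm : u + v = m := Finset.HasAntidiagonal.mem_antidiagonal.mp huv
    have hsum : Finsupp.degree u + Finsupp.degree v = dp + dq := by
      rw [← hmd, ← huvm]
      rw [degree_fin2, degree_fin2, degree_fin2]
      simp [Finsupp.add_apply]
      ring
    simp only
    rcases Nat.lt_trichotomy (Finsupp.degree u) dp with hu | hu | hu
    · -- then degree v > dq : coeff v q = 0 and coeff v Q = 0
      have hv : dq < Finsupp.degree v := by omega
      have h1 : coeff v q = 0 := by
        apply coeff_eq_zero_of_totalDegree_lt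
        rw [← hdq] -- note: goal uses ∑ i ∈ v.support, v i
        calc dq < Finsupp.degree v := hv
          _ = ∑ i ∈ v.support, v i := rfl
      have h2 : coeff v Q = 0 := by
        rw [hQ, coeff_homogeneousComponent, if_neg (by omega), ]
      rw [h1, h2, mul_zero, mul_zero]
    · have hv : Finsupp.degree v = dq := by omega
      rw [hP, hQ, coeff_homogeneousComponent, coeff_homogeneousComponent,
        if_pos hu, if_pos hv]
    · have h1 : coeff u p = 0 := by
        apply coeff_eq_zero_of_totalDegree_lt
        calc p.totalDegree = dp := rfl
          _ < Finsupp.degree u := hu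
          _ = ∑ i ∈ u.support, u i := rfl
      have h2 : coeff u P = 0 := by
        rw [hP, coeff_homogeneousComponent, if_neg (by omega)]
      rw [h1, h2, zero_mul, zero_mul]
  have hmem : m ∈ (p * q).support := by
    rw [mem_support_iff, hcoeff]
    exact mem_support_iff.mp hm
  have := le_totalDegree hmem
  calc dp + dq = Finsupp.degree m := hmd.symm
    _ = m.sum fun _ e => e := rfl
    _ ≤ (p * q).totalDegree := this

lemma linear_ne_zero {l : MvPolynomial (Fin 2) ℝ} (hl : IsLinearPoly l) : l ≠ 0 := by
  intro h; rw [h] at hl; simp [IsLinearPoly] at hl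

lemma totalDegree_mul_linear {l q : MvPolynomial (Fin 2) ℝ} (hl : IsLinearPoly l)
    (hq : q ≠ 0) : q.totalDegree + 1 ≤ (l * q).totalDegree := by
  have := le_totalDegree_mul (linear_ne_zero hl) hq
  rw [hl] at this
  omega

lemma eq_C_of_totalDegree_eq_zero {p : MvPolynomial (Fin 2) ℝ} (h : p.totalDegree = 0) :
    p = C (coeff 0 p) := by
  apply MvPolynomial.ext
  intro m
  rcases eq_or_ne m 0 with rfl | hm
  · simp
  · rw [coeff_C, if_neg (Ne.symm hm)]
    by_contra hc
    have hmem : m ∈ p.support := mem_support_iff.mpr hc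
    have := le_totalDegree hmem
    rw [h, deg2] at this
    refine hm (fin2_ext ?_ ?_) <;> simp <;> omega

lemma linear_prime {l : MvPolynomial (Fin 2) ℝ} (hl : IsLinearPoly l) : Prime l := by
  rw [← UniqueFactorizationMonoid.irreducible_iff_prime]
  constructor
  · intro hu
    obtain ⟨m, hm⟩ := hu.exists_right_inv
    have hl0 : l ≠ 0 := linear_ne_zero hl
    have hm0 : m ≠ 0 := by
      intro h; rw [h, mul_zero] at hm; exact absurd hm (by simp)
    have h1 := le_totalDegree_mul hl0 hm0
    rw [hm, hl] at h1
    simp at h1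
  · intro s t hst
    have hl0 : l ≠ 0 := linear_ne_zero hl
    have hs0 : s ≠ 0 := by rintro rfl; rw [zero_mul] at hst; exact hl0 hst
    have ht0 : t ≠ 0 := by rintro rfl; rw [mul_zero] at hst; exact hl0 hst
    have hge := le_totalDegree_mul hs0 ht0
    rw [← hst, hl] at hge
    have h1 : s.totalDegree = 0 ∨ t.totalDegree = 0 := by omega
    rcases h1 with h1 | h1
    · left
      have hs := eq_C_of_totalDegree_eq_zero h1
      have hne : coeff 0 s ≠ 0 := by
        intro h; rw [h, map_zero] at hs; exact hs0 hs
      rw [hs]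
      exact IsUnit.of_mul_eq_one (C (coeff 0 s)⁻¹)
        (by rw [← C_mul, mul_inv_cancel₀ hne, C_1])
    · right
      have hs := eq_C_of_totalDegree_eq_zero h1
      have hne : coeff 0 t ≠ 0 := by
        intro h; rw [h, map_zero] at hs; exact ht0 hs
      rw [hs]
      exact IsUnit.of_mul_eq_one (C (coeff 0 t)⁻¹)
        (by rw [← C_mul, mul_inv_cancel₀ hne, C_1])

lemma sameLine_of_dvd {l₁ l₂ : MvPolynomial (Fin 2) ℝ} (h1 : IsLinearPoly l₁)
    (h2 : IsLinearPoly l₂) (hd : l₁ ∣ l₂) : ∀ A, evalPt l₁ A = 0 ↔ evalPt l₂ A = 0 := by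
  obtain ⟨t, rfl⟩ := hd
  have ht0 : t ≠ 0 := by
    intro h; rw [h, mul_zero] at h2; simp [IsLinearPoly] at h2
  have hdeg : t.totalDegree = 0 := by
    have := le_totalDegree_mul (linear_ne_zero h1) ht0
    rw [h2, h1] at this
    omega
  have ht := eq_C_of_totalDegree_eq_zero hdeg
  have htne : coeff 0 t ≠ 0 := by
    intro h; rw [h, map_zero] at ht; exact ht0 ht
  intro A
  rw [evalPt_mul, ht]
  have : evalPt (C (coeff 0 t)) A = coeff 0 t := by simp [evalPt]
  rw [this]
  constructor
  · intro h; rw [h, zero_mul]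
  · intro h
    rcases mul_eq_zero.mp h with h | h
    · exact h
    · exact absurd h htne

open MvPolynomial

lemma on_line_of_two_points {l₁ l₂ : MvPolynomial (Fin 2) ℝ} (h1 : IsLinearPoly l₁)
    (h2 : IsLinearPoly l₂) {P Q R : ℝ × ℝ} (hPQ : P ≠ Q)
    (hP1 : evalPt l₁ P = 0) (hQ1 : evalPt l₁ Q = 0)
    (hP2 : evalPt l₂ P = 0) (hQ2 : evalPt l₂ Q = 0)
    (hR : evalPt l₁ R = 0) : evalPt l₂ R = 0 := by
  obtain ⟨a₁, b₁, c₁, hab1, rfl⟩ := linear_form h1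
  obtain ⟨a₂, b₂, c₂, _, rfl⟩ := linear_form h2
  rw [evalPt_linear] at hP1 hQ1 hP2 hQ2 hR ⊢
  have e1 : a₁ * (R.1 - P.1) + b₁ * (R.2 - P.2) = 0 := by linear_combination hR - hP1
  have e2 : a₁ * (Q.1 - P.1) + b₁ * (Q.2 - P.2) = 0 := by linear_combination hQ1 - hP1
  have e3 : a₂ * (Q.1 - P.1) + b₂ * (Q.2 - P.2) = 0 := by linear_combination hQ2 - hP2
  have hcross : (R.1 - P.1) * (Q.2 - P.2) = (R.2 - P.2) * (Q.1 - P.1) := by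
    rcases not_and_or.mp hab1 with ha | hb
    · apply mul_left_cancel₀ ha
      linear_combination (Q.2 - P.2) * e1 - (R.2 - P.2) * e2
    · apply mul_left_cancel₀ hb
      linear_combination (R.1 - P.1) * e2 - (Q.1 - P.1) * e1
  have hv : Q.1 - P.1 ≠ 0 ∨ Q.2 - P.2 ≠ 0 := by
    by_contra hc
    push_neg at hc
    exact hPQ (Prod.ext (by linarith [hc.1]) (by linarith [hc.2]))
  rcases hv with hv | hv
  · apply mul_left_cancel₀ hv
    rw [mul_zero]
    linear_combination (Q.1 - P.1) * hP2 + (R.1 - P.1) * e3 - b₂ * hcross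
  · apply mul_left_cancel₀ hv
    rw [mul_zero]
    linear_combination (Q.2 - P.2) * hP2 + (R.2 - P.2) * e3 + a₂ * hcross

lemma sameLine_of_two_points' {l₁ l₂ : MvPolynomial (Fin 2) ℝ} (h1 : IsLinearPoly l₁)
    (h2 : IsLinearPoly l₂) {P Q : ℝ × ℝ} (hPQ : P ≠ Q)
    (hP1 : evalPt l₁ P = 0) (hQ1 : evalPt l₁ Q = 0)
    (hP2 : evalPt l₂ P = 0) (hQ2 : evalPt l₂ Q = 0) : SameLine l₁ l₂ :=
  fun R => ⟨fun hR => on_line_of_two_points h1 h2 hPQ hP1 hQ1 hP2 hQ2 hR,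
            fun hR => on_line_of_two_points h2 h1 hPQ hP2 hQ2 hP1 hQ1 hR⟩

open MvPolynomial

lemma fund_exists {n : ℕ} {X : Finset (ℝ × ℝ)} (hX : NCorrect n X) {A : ℝ × ℝ}
    (hA : A ∈ X) : ∃ p, IsFundamental n X A p := by
  obtain ⟨p, ⟨hdeg, hval⟩, _⟩ := hX.2 (fun B => if B = A then 1 else 0)
  refine ⟨p, hdeg, ?_, ?_⟩
  · simpa using hval A hA
  · intro B hB hBA
    simpa [hBA] using hval B hB

lemma not_same_of_card {n : ℕ} {X : Finset (ℝ × ℝ)} {l lam : MvPolynomial (Fin 2) ℝ}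
    (hk : (X.filter (fun A => OnLine l A)).card ≤ n)
    (hlam : IsMaximalLine n X lam) : ¬ SameLine l lam := by
  intro hs
  have he : X.filter (fun A => OnLine l A) = X.filter (fun A => OnLine lam A) :=
    Finset.filter_congr (fun A _ => hs A)
  rw [he, hlam.2] at hk
  omega

lemma not_dvd_of_not_same {l lam : MvPolynomial (Fin 2) ℝ} (hl : IsLinearPoly l)
    (hlam : IsLinearPoly lam) (h : ¬ SameLine l lam) : ¬ l ∣ lam :=
  fun hd => h (fun P => sameLine_of_dvd hl hlam hd P)

lemma used_not_on_max
    {n : ℕ} (hn : 2 ≤ n) {X : Finset (ℝ × ℝ)}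
    {l : MvPolynomial (Fin 2) ℝ} (hl : IsLinearPoly l)
    (hk : (X.filter (fun A => OnLine l A)).card ≤ n)
    {lam₁ lam₂ : MvPolynomial (Fin 2) ℝ}
    (h₁ : IsMaximalLine n X lam₁) (h₂ : IsMaximalLine n X lam₂)
    (hne : ¬ SameLine lam₁ lam₂)
    {O : ℝ × ℝ} (hO : O ∈ X) (hO₁ : OnLine lam₁ O) (hO₂ : OnLine lam₂ O) (hOl : OnLine l O)
    {A : ℝ × ℝ} (hA : A ∈ X) (hA₁ : OnLine lam₁ A)
    {p : MvPolynomial (Fin 2) ℝ} (hp : IsFundamental n X A p) (hdvd : l ∣ p) : False := by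
  obtain ⟨hpdeg, hpA, hpvan⟩ := hp
  have hA₁' : evalPt lam₁ A = 0 := hA₁
  have hOl' : evalPt l O = 0 := hOl
  have hO₁' : evalPt lam₁ O = 0 := hO₁
  have hO₂' : evalPt lam₂ O = 0 := hO₂
  have hp0 : p ≠ 0 := by
    intro h; rw [h] at hpA; simp [evalPt] at hpA
  have hnsl₁ : ¬ SameLine l lam₁ := not_same_of_card hk h₁
  have hnsl₂ : ¬ SameLine l lam₂ := not_same_of_card hk h₂
  have habs : ¬ lam₁ ∣ p := by
    rintro ⟨w, rfl⟩
    rw [evalPt_mul, hA₁', zero_mul] at hpA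
    exact zero_ne_one hpA
  by_cases hAO : A = O
  · subst hAO
    obtain ⟨t, rfl⟩ := hdvd
    have ht0 : t ≠ 0 := right_ne_zero_of_mul hp0
    have htdeg : t.totalDegree ≤ n - 1 := by
      have h1 := totalDegree_mul_linear hl ht0
      omega
    apply habs
    have hlt : lam₁ ∣ t := by
      apply line_dvd (n-1) h₁.1 htdeg ((X.filter (fun B => OnLine lam₁ B)).erase A)
      · rw [Finset.card_erase_of_mem (Finset.mem_filter.mpr ⟨hA, hA₁⟩), h₁.2]
        omega
      · intro B hB
        exact (Finset.mem_filter.mp (Finset.mem_erase.mp hB).2).2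
      · intro B hB
        obtain ⟨hBA, hBf⟩ := Finset.mem_erase.mp hB
        obtain ⟨hBX, hB₁⟩ := Finset.mem_filter.mp hBf
        have hB₁' : evalPt lam₁ B = 0 := hB₁
        have hlB : evalPt l B ≠ 0 := by
          intro h0
          exact hnsl₁ (sameLine_of_two_points' hl h₁.1 hBA h0 hOl' hB₁' hA₁')
        have hz := hpvan B hBX hBA
        rw [evalPt_mul] at hz
        rcases mul_eq_zero.mp hz with h | h
        · exact absurd h hlB
        · exact h
    exact hlt.mul_left l
  · have hA₂ : ¬ OnLine lam₂ A := by
      intro h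
      exact hne (sameLine_of_two_points' h₁.1 h₂.1 hAO hA₁' hO₁' h hO₂')
    have h2p : lam₂ ∣ p := by
      apply line_dvd n h₂.1 hpdeg (X.filter (fun B => OnLine lam₂ B))
      · rw [h₂.2]
      · intro B hB
        exact (Finset.mem_filter.mp hB).2
      · intro B hB
        obtain ⟨hBX, hB₂⟩ := Finset.mem_filter.mp hB
        exact hpvan B hBX (fun h => hA₂ (h ▸ hB₂))
    obtain ⟨u, rfl⟩ := h2p
    have hu0 : u ≠ 0 := right_ne_zero_of_mul hp0
    have hudeg : u.totalDegree ≤ n - 1 := by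
      have h1 := totalDegree_mul_linear h₂.1 hu0
      omega
    have hlu : l ∣ u := by
      rcases (linear_prime hl).dvd_mul.mp hdvd with h | h
      · exact absurd (fun P => sameLine_of_dvd hl h₂.1 h P) hnsl₂
      · exact h
    obtain ⟨s, rfl⟩ := hlu
    have hs0 : s ≠ 0 := right_ne_zero_of_mul hu0
    have hsdeg : s.totalDegree ≤ n - 2 := by
      have h1 := totalDegree_mul_linear hl hs0
      omega
    apply habs
    have hds : lam₁ ∣ s := by
      apply line_dvd (n-2) h₁.1 hsdeg (((X.filter (fun B => OnLine lam₁ B)).erase A).erase O)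
      · have hOmem : O ∈ (X.filter (fun B => OnLine lam₁ B)).erase A :=
          Finset.mem_erase.mpr ⟨fun h => hAO h.symm, Finset.mem_filter.mpr ⟨hO, hO₁⟩⟩
        rw [Finset.card_erase_of_mem hOmem,
          Finset.card_erase_of_mem (Finset.mem_filter.mpr ⟨hA, hA₁⟩), h₁.2]
        omega
      · intro B hB
        exact (Finset.mem_filter.mp (Finset.mem_erase.mp (Finset.mem_erase.mp hB).2).2).2
      · intro B hB
        obtain ⟨hBO, hB'⟩ := Finset.mem_erase.mp hB
        obtain ⟨hBA, hBf⟩ := Finset.mem_erase.mp hB'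
        obtain ⟨hBX, hB₁⟩ := Finset.mem_filter.mp hBf
        have hB₁' : evalPt lam₁ B = 0 := hB₁
        have hl2B : evalPt lam₂ B ≠ 0 := by
          intro h0
          exact hne (sameLine_of_two_points' h₁.1 h₂.1 hBO hB₁' hO₁' h0 hO₂')
        have hlB : evalPt l B ≠ 0 := by
          intro h0
          exact hnsl₁ ((fun P => (sameLine_of_two_points' hl h₁.1 hBO h0 hOl' hB₁' hO₁') P))
        have hz := hpvan B hBX hBA
        rw [evalPt_mul, evalPt_mul] at hz
        rcases mul_eq_zero.mp hz with h | h
        · exact absurd h hl2B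
        · rcases mul_eq_zero.mp h with h' | h'
          · exact absurd h' hlB
          · exact h'
    exact (hds.mul_left l).mul_left lam₂

lemma factor_fund
    {n : ℕ} (hn : 2 ≤ n) {X : Finset (ℝ × ℝ)}
    {lam₁ lam₂ : MvPolynomial (Fin 2) ℝ}
    (h₁ : IsMaximalLine n X lam₁) (h₂ : IsMaximalLine n X lam₂)
    (hne : ¬ SameLine lam₁ lam₂)
    {O : ℝ × ℝ} (hO : O ∈ X) (hO₁ : OnLine lam₁ O) (hO₂ : OnLine lam₂ O)
    {A : ℝ × ℝ} (hA₁ : ¬ OnLine lam₁ A) (hA₂ : ¬ OnLine lam₂ A)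
    {p : MvPolynomial (Fin 2) ℝ} (hp : IsFundamental n X A p) :
    ∃ q, p = lam₁ * (lam₂ * q) ∧ q.totalDegree ≤ n - 2 := by
  obtain ⟨hpdeg, hpA, hpvan⟩ := hp
  have hO₁' : evalPt lam₁ O = 0 := hO₁
  have hO₂' : evalPt lam₂ O = 0 := hO₂
  have hp0 : p ≠ 0 := by
    intro h; rw [h] at hpA; simp [evalPt] at hpA
  have h1p : lam₁ ∣ p := by
    apply line_dvd n h₁.1 hpdeg (X.filter (fun B => OnLine lam₁ B))
    · rw [h₁.2]
    · intro B hB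
      exact (Finset.mem_filter.mp hB).2
    · intro B hB
      obtain ⟨hBX, hB₁⟩ := Finset.mem_filter.mp hB
      exact hpvan B hBX (fun h => hA₁ (h ▸ hB₁))
  obtain ⟨u, rfl⟩ := h1p
  have hu0 : u ≠ 0 := right_ne_zero_of_mul hp0
  have hudeg : u.totalDegree ≤ n - 1 := by
    have h1 := totalDegree_mul_linear h₁.1 hu0
    omega
  have h2u : lam₂ ∣ u := by
    apply line_dvd (n-1) h₂.1 hudeg ((X.filter (fun B => OnLine lam₂ B)).erase O)
    · rw [Finset.card_erase_of_mem (Finset.mem_filter.mpr ⟨hO, hO₂⟩), h₂.2]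
      omega
    · intro B hB
      exact (Finset.mem_filter.mp (Finset.mem_erase.mp hB).2).2
    · intro B hB
      obtain ⟨hBO, hBf⟩ := Finset.mem_erase.mp hB
      obtain ⟨hBX, hB₂⟩ := Finset.mem_filter.mp hBf
      have hB₂' : evalPt lam₂ B = 0 := hB₂
      have hl1B : evalPt lam₁ B ≠ 0 := by
        intro h0
        exact hne (sameLine_of_two_points' h₁.1 h₂.1 hBO h0 hO₁' hB₂' hO₂')
      have hz := hpvan B hBX (fun h => hA₂ (h ▸ hB₂))
      rw [evalPt_mul] at hz
      rcases mul_eq_zero.mp hz with h | h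
      · exact absurd h hl1B
      · exact h
  obtain ⟨q, rfl⟩ := h2u
  have hq0 : q ≠ 0 := right_ne_zero_of_mul hu0
  have hqdeg : q.totalDegree ≤ n - 2 := by
    have h1 := totalDegree_mul_linear h₂.1 hq0
    omega
  exact ⟨q, rfl, hqdeg⟩

/-- `l`-adjoint reduction: if two (distinct) maximal lines `lam'`, `lam''`
meet `l` at a common node of `X`, then `Xˡ = (X \ (lam' ∪ lam''))ˡ`. -/
theorem adjoint_reduction
    (n : ℕ) (hn : 2 ≤ n) (X : Finset (ℝ × ℝ)) (hX : NCorrect n X)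
    (l : MvPolynomial (Fin 2) ℝ) (hl : IsLinearPoly l)
    (hk : (X.filter (fun A => OnLine l A)).card ≤ n)
    (lam' lam'' : MvPolynomial (Fin 2) ℝ)
    (hlam' : IsMaximalLine n X lam') (hlam'' : IsMaximalLine n X lam'')
    (hne : ¬ SameLine lam' lam'')
    (hadj : ∃ A ∈ X, OnLine lam' A ∧ OnLine lam'' A ∧ OnLine l A) :
    UsedSet n X l =
      UsedSet (n - 2) (X.filter (fun A => ¬ OnLine lam' A ∧ ¬ OnLine lam'' A)) l := by
  obtain ⟨O, hO, hO', hO'', hOl⟩ := hadj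
  have hne' : ¬ SameLine lam'' lam' := fun h => hne (fun P => (h P).symm)
  have hnsl' : ¬ SameLine l lam' := not_same_of_card hk hlam'
  have hnsl'' : ¬ SameLine l lam'' := not_same_of_card hk hlam''
  apply Finset.ext
  intro A
  rw [UsedSet, UsedSet, Finset.mem_filter, Finset.mem_filter]
  constructor
  · rintro ⟨hAX, p, hp, hdvd⟩
    have hA1 : ¬ OnLine lam' A := fun h =>
      used_not_on_max hn hl hk hlam' hlam'' hne hO hO' hO'' hOl hAX h hp hdvd
    have hA2 : ¬ OnLine lam'' A := fun h =>
      used_not_on_max hn hl hk hlam'' hlam' hne' hO hO'' hO' hOl hAX h hp hdvd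
    obtain ⟨q, hfac, hqdeg⟩ := factor_fund hn hlam' hlam'' hne hO hO' hO'' hA1 hA2 hp
    have hk1 : evalPt lam' A ≠ 0 := hA1
    have hk2 : evalPt lam'' A ≠ 0 := hA2
    set k : ℝ := evalPt lam' A * evalPt lam'' A with hkdef
    have hk0 : k ≠ 0 := mul_ne_zero hk1 hk2
    have hqA : evalPt lam' A * (evalPt lam'' A * evalPt q A) = 1 := by
      rw [← evalPt_mul, ← evalPt_mul, ← hfac]
      exact hp.2.1
    refine ⟨Finset.mem_filter.mpr ⟨hAX, hA1, hA2⟩, C k * q, ⟨?_, ?_, ?_⟩, ?_⟩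
    · refine le_trans (totalDegree_mul _ _) ?_
      rw [totalDegree_C, zero_add]
      exact hqdeg
    · rw [evalPt_mul]
      have hCk : evalPt (C k) A = k := by simp [evalPt]
      rw [hCk, hkdef, mul_assoc]
      exact hqA
    · intro B hB hBA
      obtain ⟨hBX, hB1, hB2⟩ := Finset.mem_filter.mp hB
      have hz := hp.2.2 B hBX hBA
      rw [hfac, evalPt_mul, evalPt_mul] at hz
      have hB1' : evalPt lam' B ≠ 0 := hB1
      have hB2' : evalPt lam'' B ≠ 0 := hB2
      have hqB : evalPt q B = 0 := by
        rcases mul_eq_zero.mp hz with h | h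
        · exact absurd h hB1'
        · rcases mul_eq_zero.mp h with h' | h'
          · exact absurd h' hB2'
          · exact h'
      rw [evalPt_mul, hqB, mul_zero]
    · have hlq : l ∣ q := by
        rw [hfac] at hdvd
        rcases (linear_prime hl).dvd_mul.mp hdvd with h | h
        · exact absurd (fun P => sameLine_of_dvd hl hlam'.1 h P) hnsl'
        · rcases (linear_prime hl).dvd_mul.mp h with h' | h'
          · exact absurd (fun P => sameLine_of_dvd hl hlam''.1 h' P) hnsl''
          · exact h'
      exact hlq.mul_left _
  · rintro ⟨hAY, q', hq', hdvd'⟩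
    obtain ⟨hAX, hA1, hA2⟩ := Finset.mem_filter.mp hAY
    obtain ⟨p, hp⟩ := fund_exists hX hAX
    obtain ⟨q, hfac, hqdeg⟩ := factor_fund hn hlam' hlam'' hne hO hO' hO'' hA1 hA2 hp
    have hk1 : evalPt lam' A ≠ 0 := hA1
    have hk2 : evalPt lam'' A ≠ 0 := hA2
    set k : ℝ := evalPt lam' A * evalPt lam'' A with hkdef
    have hk0 : k ≠ 0 := mul_ne_zero hk1 hk2
    have hqA : evalPt lam' A * (evalPt lam'' A * evalPt q A) = 1 := by
      rw [← evalPt_mul, ← evalPt_mul, ← hfac]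
      exact hp.2.1
    -- q' is the fundamental polynomial of A in Y, which equals C k * q
    have key : q' = C k * q := by
      have hsubdeg : (q' - C k * q).totalDegree ≤ n - 2 := by
        rw [sub_eq_add_neg]
        refine le_trans (totalDegree_add _ _) (max_le hq'.1 ?_)
        have hneg : -(C k * q) = C (-k) * q := by
          rw [map_neg]; ring
        rw [hneg]
        refine le_trans (totalDegree_mul _ _) ?_
        rw [totalDegree_C, zero_add]
        exact hqdeg
      set D : MvPolynomial (Fin 2) ℝ := lam' * (lam'' * (q' - C k * q)) with hD
      have hDdeg : D.totalDegree ≤ n := by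
        refine le_trans (totalDegree_mul _ _) ?_
        rw [hlam'.1]
        have h2 : (lam'' * (q' - C k * q)).totalDegree ≤ 1 + (n - 2) := by
          refine le_trans (totalDegree_mul _ _) ?_
          rw [hlam''.1]
          omega
        omega
      have hDvan : ∀ B ∈ X, evalPt D B = 0 := by
        intro B hBX
        rw [hD, evalPt_mul, evalPt_mul]
        by_cases hB1 : OnLine lam' B
        · have : evalPt lam' B = 0 := hB1
          rw [this, zero_mul]
        · by_cases hB2 : OnLine lam'' B
          · have : evalPt lam'' B = 0 := hB2
            rw [this, zero_mul, mul_zero]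
          · have hBY : B ∈ X.filter (fun C => ¬ OnLine lam' C ∧ ¬ OnLine lam'' C) :=
              Finset.mem_filter.mpr ⟨hBX, hB1, hB2⟩
            have hsub : evalPt (q' - C k * q) B = 0 := by
              have hsub' : evalPt (q' - C k * q) B = evalPt q' B - evalPt (C k * q) B := by
                simp [evalPt]
              rcases eq_or_ne B A with rfl | hBA
              · have h1 : evalPt q' B = 1 := hq'.2.1
                have h2 : evalPt (C k * q) B = 1 := by
                  rw [evalPt_mul]
                  have hCk : evalPt (C k) B = k := by simp [evalPt]
                  rw [hCk, hkdef, mul_assoc]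
                  exact hqA
                rw [hsub', h1, h2, sub_self]
              · have h1 : evalPt q' B = 0 := hq'.2.2 B hBY hBA
                have h2 : evalPt q B = 0 := by
                  have hz := hp.2.2 B hBX hBA
                  rw [hfac, evalPt_mul, evalPt_mul] at hz
                  have hB1' : evalPt lam' B ≠ 0 := hB1
                  have hB2' : evalPt lam'' B ≠ 0 := hB2
                  rcases mul_eq_zero.mp hz with h | h
                  · exact absurd h hB1'
                  · rcases mul_eq_zero.mp h with h' | h'
                    · exact absurd h' hB2'
                    · exact h'
                rw [hsub', h1, evalPt_mul, h2, mul_zero, sub_zero]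
            rw [hsub, mul_zero, mul_zero]
      obtain ⟨p₀, _, huniq⟩ := hX.2 (fun _ => 0)
      have hDzero : D = 0 := by
        have e1 := huniq D ⟨hDdeg, hDvan⟩
        have e2 := huniq 0 ⟨by rw [totalDegree_zero]; omega, by intro B _; simp [evalPt]⟩
        rw [e1, e2]
      have : q' - C k * q = 0 := by
        rcases mul_eq_zero.mp hDzero with h | h
        · exact absurd h (linear_ne_zero hlam'.1)
        · rcases mul_eq_zero.mp h with h' | h'
          · exact absurd h' (linear_ne_zero hlam''.1)
          · exact h'
      exact sub_eq_zero.mp this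
    have hlq : l ∣ q := by
      rw [key] at hdvd'
      rcases (linear_prime hl).dvd_mul.mp hdvd' with h | h
      · exfalso
        obtain ⟨w, hw⟩ := h
        have hCk0 : (C k : MvPolynomial (Fin 2) ℝ) ≠ 0 := by
          intro hc
          exact hk0 (by simpa using congrArg (coeff 0) hc)
        have hw0 : w ≠ 0 := by
          intro hc; rw [hc, mul_zero] at hw; exact hCk0 hw
        have := le_totalDegree_mul (linear_ne_zero hl) hw0
        rw [← hw, totalDegree_C, hl] at this
        omega
      · exact h
    exact ⟨hAX, p, hp, hfac ▸ (hlq.mul_left lam'').mul_left lam'⟩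
end
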